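/- arXiv:1605.07421 — 13 statements merged into one kernel-verified Lean document; each statement's English description precedes it below -/
import Mathlib

section
/- Let H be a real Hilbert space, let C ⊆ H be a nonempty closed convex set, and let β ∈ (0, 1). Then the set of fixed points of the modified reflector 2βP_C − I is exactly the singleton {β P_C(0)}; that is, (2βP_C − I)(x) = x if and only if x = β P_C(0). -/
open RealInnerProductSpace

/-- For a nonempty closed convex set `C` and `β ∈ (0,1)`, the set of
fixed points of the modified reflector `2βP_C − I` is exactly `{β P_C(0)}`. -/
theorem stmt_1 {H : Type*} [NormedAddCommGroup H] [InnerProductSpace ℝ H] [CompleteSpace H]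
    (C : Set H) (hCne : C.Nonempty) (hCc : IsClosed C) (hCv : Convex ℝ C)
    (PC : H → H) (hPC : ∀ x, PC x ∈ C ∧ ∀ c ∈ C, ‖x - PC x‖ ≤ ‖x - c‖)
    (β : ℝ) (hβ : β ∈ Set.Ioo (0 : ℝ) 1) (x : H) :
    (2 * β) • PC x - x = x ↔ x = β • PC 0 := by
  obtain ⟨hβ0, hβ1⟩ := hβ
  haveI : Nonempty C := hCne.to_subtype
  -- variational inequality for PC
  have key : ∀ y : H, ∀ c ∈ C, ⟪y - PC y, c - PC y⟫ ≤ 0 := by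
    intro y
    have hmem := (hPC y).1
    have heq : ‖y - PC y‖ = ⨅ w : C, ‖y - w‖ := by
      apply le_antisymm
      · exact le_ciInf fun w => (hPC y).2 w w.2
      · exact ciInf_le ⟨0, fun r ⟨w, hw⟩ => hw ▸ norm_nonneg _⟩ (⟨PC y, hmem⟩ : C)
    exact (norm_eq_iInf_iff_real_inner_le_zero hCv hmem).1 heq
  -- uniqueness: anything satisfying the variational inequality equals PC
  have uniq : ∀ y : H, ∀ v ∈ C, (∀ c ∈ C, ⟪y - v, c - v⟫ ≤ 0) → v = PC y := by
    intro y v hv hvar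
    have h1 := hvar (PC y) (hPC y).1
    have h2 := key y v hv
    have hsub : ⟪y - v, PC y - v⟫ - ⟪y - PC y, PC y - v⟫ = ⟪PC y - v, PC y - v⟫ := by
      rw [← inner_sub_left]; congr 1; abel
    have h2' : -⟪y - PC y, PC y - v⟫ ≤ 0 := by
      rw [show v - PC y = -(PC y - v) by abel, inner_neg_right] at h2; linarith
    have hle : ⟪PC y - v, PC y - v⟫ ≤ 0 := by linarith
    have hz : PC y - v = 0 := by
      have h := real_inner_self_nonneg (x := PC y - v)
      have : ⟪PC y - v, PC y - v⟫ = (0 : ℝ) := le_antisymm hle h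
      exact inner_self_eq_zero.mp (by exact_mod_cast this)
    exact (sub_eq_zero.mp hz).symm
  -- inner product of PC 0 against c - PC 0 is nonneg
  have key0 : ∀ c ∈ C, (0 : ℝ) ≤ ⟪PC 0, c - PC 0⟫ := by
    intro c hc
    have := key 0 c hc
    rw [zero_sub, inner_neg_left] at this
    linarith
  constructor
  · intro hfix
    set p := PC x with hp
    -- x = β • p
    have hx : x = β • p := by
      have h0 : (2 * β) • p = x + x := eq_add_of_sub_eq hfix
      have h2 : (2 : ℝ) • (β • p) = (2 : ℝ) • x := by
        rw [smul_smul, h0, two_smul]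
      exact (smul_right_injective H two_ne_zero h2).symm
    -- show p = PC 0
    have hvar : ∀ c ∈ C, ⟪(0 : H) - p, c - p⟫ ≤ 0 := by
      intro c hc
      have hk := key x c hc
      rw [← hp, hx, show β • p - p = (β - 1) • p by rw [sub_smul, one_smul],
        real_inner_smul_left] at hk
      have hne : β - 1 < 0 := by linarith
      have hnn : (0 : ℝ) ≤ ⟪p, c - p⟫ := nonneg_of_mul_nonpos_right hk hne
      rw [zero_sub, inner_neg_left]
      linarith
    have h := uniq 0 p (hPC x).1 hvar
    rw [hx, ← h]
  · intro hx
    -- show PC 0 = PC x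
    have hvar : ∀ c ∈ C, ⟪x - PC 0, c - PC 0⟫ ≤ 0 := by
      intro c hc
      rw [hx, show β • PC 0 - PC 0 = (β - 1) • PC 0 by rw [sub_smul, one_smul],
        real_inner_smul_left]
      have := key0 c hc
      nlinarith
    have hP : PC 0 = PC x := uniq x (PC 0) (hPC 0).1 hvar
    rw [hx] at hP
    rw [hx, ← hP, ← sub_smul]
    congr 1
    ring
end

section
/- Let H be a real Hilbert space and let A, B ⊆ H be nonempty closed convex sets. For all α, β ∈ (0, 1), the AAMR operator T_{A,B,α,β} = (1−α)I + α(2βP_B − I)(2βP_A − I) is α-averaged, i.e., there exists a nonexpansive operator R : H → H with T_{A,B,α,β} = (1−α)I + αR; in particular T_{A,B,α,β} is nonexpansive. Moreover, if α ∈ (0, 1/2], then T_{A,B,α,β} is firmly nonexpansive, i.e., ⟨x − y, T(x) − T(y)⟩ ≥ ‖T(x) − T(y)‖² for all x, y ∈ H. -/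
open RealInnerProductSpace

-- firm nonexpansiveness of a metric projector
lemma proj_firm {H : Type*} [NormedAddCommGroup H] [InnerProductSpace ℝ H]
    (C : Set H) (hCne : C.Nonempty) (hCv : Convex ℝ C) (P : H → H)
    (hP : ∀ x, P x ∈ C ∧ ∀ c ∈ C, ‖x - P x‖ ≤ ‖x - c‖) :
    ∀ x y, ⟪x - y, P x - P y⟫ ≥ ‖P x - P y‖ ^ 2 := by
  have vi : ∀ x, ∀ w ∈ C, ⟪x - P x, w - P x⟫ ≤ 0 := by
    intro x
    have hiInf : ‖x - P x‖ = ⨅ w : C, ‖x - w‖ := by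
      haveI : Nonempty C := hCne.to_subtype
      refine le_antisymm (le_ciInf fun w => (hP x).2 w w.2) ?_
      have hbdd : BddBelow (Set.range fun w : C => ‖x - (w : H)‖) :=
        ⟨0, by rintro r ⟨w, rfl⟩; exact norm_nonneg _⟩
      exact ciInf_le hbdd ⟨P x, (hP x).1⟩
    exact (norm_eq_iInf_iff_real_inner_le_zero hCv (hP x).1).mp hiInf
  intro x y
  have ha := vi x (P y) (hP y).1
  have hb := vi y (P x) (hP x).1
  have key : ⟪x - y, P x - P y⟫ - ‖P x - P y‖ ^ 2 =
      -⟪x - P x, P y - P x⟫ - ⟪y - P y, P x - P y⟫ := by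
    simp only [← real_inner_self_eq_norm_sq, inner_sub_left, inner_sub_right]
    ring
  linarith

-- nonexpansiveness of x ↦ 2β P x - x
lemma refl_nonexp {H : Type*} [NormedAddCommGroup H] [InnerProductSpace ℝ H]
    (C : Set H) (hCne : C.Nonempty) (hCv : Convex ℝ C) (P : H → H)
    (hP : ∀ x, P x ∈ C ∧ ∀ c ∈ C, ‖x - P x‖ ≤ ‖x - c‖)
    (β : ℝ) (hβ0 : 0 < β) (hβ1 : β ≤ 1) :
    ∀ x y, ‖((2 * β) • P x - x) - ((2 * β) • P y - y)‖ ≤ ‖x - y‖ := by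
  intro x y
  have hfirm := proj_firm C hCne hCv P hP x y
  have heq : ((2 * β) • P x - x) - ((2 * β) • P y - y)
      = (2 * β) • (P x - P y) - (x - y) := by
    simp [smul_sub]; abel
  have hsq : ‖((2 * β) • P x - x) - ((2 * β) • P y - y)‖ ^ 2 ≤ ‖x - y‖ ^ 2 := by
    rw [heq, norm_sub_sq_real, real_inner_smul_left, norm_smul]
    have h1 : ‖(2 * β : ℝ)‖ = 2 * β := by
      rw [Real.norm_eq_abs]; exact abs_of_pos (by linarith)
    rw [h1, real_inner_comm]
    have h2 : 4 * β * ‖P x - P y‖ ^ 2 ≤ 4 * β * ⟪x - y, P x - P y⟫ :=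
      mul_le_mul_of_nonneg_left hfirm (by linarith)
    have h3 : 4 * β ^ 2 * ‖P x - P y‖ ^ 2 ≤ 4 * β * ‖P x - P y‖ ^ 2 := by
      have hb : β ^ 2 ≤ β := by nlinarith
      nlinarith [mul_le_mul_of_nonneg_right hb (sq_nonneg ‖P x - P y‖)]
    nlinarith [h2, h3]
  calc ‖_‖ = Real.sqrt (‖((2 * β) • P x - x) - ((2 * β) • P y - y)‖ ^ 2) := (Real.sqrt_sq (norm_nonneg _)).symm
    _ ≤ Real.sqrt (‖x - y‖ ^ 2) := Real.sqrt_le_sqrt hsq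
    _ = ‖x - y‖ := Real.sqrt_sq (norm_nonneg _)


lemma averaged_props {H : Type*} [NormedAddCommGroup H] [InnerProductSpace ℝ H]
    (α : ℝ) (hα0 : 0 < α) (hα1 : α < 1) (R T : H → H)
    (hRne : ∀ x y, ‖R x - R y‖ ≤ ‖x - y‖)
    (hTR : ∀ x, T x = (1 - α) • x + α • R x) :
    (∀ x y, ‖T x - T y‖ ≤ ‖x - y‖) ∧
    (α ≤ 1 / 2 → ∀ x y, ⟪x - y, T x - T y⟫ ≥ ‖T x - T y‖ ^ 2) := by
  have hdiff : ∀ x y, T x - T y = (1 - α) • (x - y) + α • (R x - R y) := by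
    intro x y
    rw [hTR x, hTR y, smul_sub, smul_sub]
    abel
  have hTne : ∀ x y, ‖T x - T y‖ ≤ ‖x - y‖ := by
    intro x y
    rw [hdiff]
    calc ‖(1 - α) • (x - y) + α • (R x - R y)‖
        ≤ ‖(1 - α) • (x - y)‖ + ‖α • (R x - R y)‖ := norm_add_le _ _
      _ = (1 - α) * ‖x - y‖ + α * ‖R x - R y‖ := by
          rw [norm_smul, norm_smul, Real.norm_eq_abs, Real.norm_eq_abs,
            abs_of_pos (by linarith : (0:ℝ) < 1 - α), abs_of_pos hα0]
      _ ≤ (1 - α) * ‖x - y‖ + α * ‖x - y‖ :=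
          add_le_add_right (mul_le_mul_of_nonneg_left (hRne x y) hα0.le) _
      _ = ‖x - y‖ := by ring
  refine ⟨hTne, ?_⟩
  intro hhalf x y
  set u := x - y
  set v := R x - R y
  have hba : ‖v‖ ≤ ‖u‖ := hRne x y
  have hc : ⟪u, v⟫ ≤ ‖u‖ * ‖v‖ := real_inner_le_norm u v
  have hlhs : ⟪u, T x - T y⟫ = (1 - α) * ‖u‖ ^ 2 + α * ⟪u, v⟫ := by
    rw [hdiff x y, inner_add_right, real_inner_smul_right, real_inner_smul_right,
      real_inner_self_eq_norm_sq]
  have hrhs : ‖T x - T y‖ ^ 2 =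
      (1 - α) ^ 2 * ‖u‖ ^ 2 + 2 * ((1 - α) * α * ⟪u, v⟫) + α ^ 2 * ‖v‖ ^ 2 := by
    rw [hdiff x y, norm_add_sq_real, norm_smul, norm_smul, real_inner_smul_left,
      real_inner_smul_right, Real.norm_eq_abs, Real.norm_eq_abs,
      abs_of_pos (by linarith : (0:ℝ) < 1 - α), abs_of_pos hα0]
    ring
  have hbr : (1 - α) * ‖u‖ ^ 2 + (2 * α - 1) * ⟪u, v⟫ - α * ‖v‖ ^ 2 ≥ 0 := by
    have h1 : (2 * α - 1) * ⟪u, v⟫ ≥ (2 * α - 1) * (‖u‖ * ‖v‖) :=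
      mul_le_mul_of_nonpos_left hc (by linarith)
    have h2 : 0 ≤ (‖u‖ - ‖v‖) * ((1 - α) * ‖u‖ + α * ‖v‖) :=
      mul_nonneg (by linarith)
        (add_nonneg (mul_nonneg (by linarith) (norm_nonneg _))
          (mul_nonneg hα0.le (norm_nonneg _)))
    nlinarith
  rw [ge_iff_le, hrhs, hlhs]
  nlinarith [mul_nonneg hα0.le hbr]

/-- The AAMR operator `T_{A,B,α,β} = (1−α)I + α(2βP_B − I)(2βP_A − I)`
is `α`-averaged (hence nonexpansive) for `α, β ∈ (0,1)`, and firmly nonexpansive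
whenever `α ∈ (0, 1/2]`. -/
theorem stmt_2 {H : Type*} [NormedAddCommGroup H] [InnerProductSpace ℝ H] [CompleteSpace H]
    (A B : Set H) (hAne : A.Nonempty) (hAc : IsClosed A) (hAv : Convex ℝ A)
    (hBne : B.Nonempty) (hBc : IsClosed B) (hBv : Convex ℝ B)
    (PA PB : H → H)
    (hPA : ∀ x, PA x ∈ A ∧ ∀ c ∈ A, ‖x - PA x‖ ≤ ‖x - c‖)
    (hPB : ∀ x, PB x ∈ B ∧ ∀ c ∈ B, ‖x - PB x‖ ≤ ‖x - c‖)
    (α β : ℝ) (hα : α ∈ Set.Ioo (0 : ℝ) 1) (hβ : β ∈ Set.Ioo (0 : ℝ) 1)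
    (T : H → H)
    (hT : ∀ x, T x =
      (1 - α) • x + α • ((2 * β) • PB ((2 * β) • PA x - x) - ((2 * β) • PA x - x))) :
    (∃ R : H → H, (∀ x y, ‖R x - R y‖ ≤ ‖x - y‖) ∧ ∀ x, T x = (1 - α) • x + α • R x) ∧
    (∀ x y, ‖T x - T y‖ ≤ ‖x - y‖) ∧
    (α ≤ 1 / 2 → ∀ x y, ⟪x - y, T x - T y⟫ ≥ ‖T x - T y‖ ^ 2) := by
  obtain ⟨hα0, hα1⟩ := hα
  obtain ⟨hβ0, hβ1⟩ := hβ
  have hRne : ∀ x y,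
      ‖((2 * β) • PB ((2 * β) • PA x - x) - ((2 * β) • PA x - x)) -
        ((2 * β) • PB ((2 * β) • PA y - y) - ((2 * β) • PA y - y))‖ ≤ ‖x - y‖ := by
    intro x y
    exact le_trans
      (refl_nonexp B hBne hBv PB hPB β hβ0 hβ1.le ((2 * β) • PA x - x) ((2 * β) • PA y - y))
      (refl_nonexp A hAne hAv PA hPA β hβ0 hβ1.le x y)
  obtain ⟨h1, h2⟩ := averaged_props α hα0 hα1
    (fun x => (2 * β) • PB ((2 * β) • PA x - x) - ((2 * β) • PA x - x)) T hRne hT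
  exact ⟨⟨_, hRne, hT⟩, h1, h2⟩
end

section
/- Let H be a real Hilbert space, let A, B ⊆ H be nonempty closed convex sets, and let α, β ∈ (0, 1). If x ∈ H is a fixed point of the AAMR operator T_{A,B,α,β}, then A ∩ B ≠ ∅ and P_A(x) is the projection of 0 onto A ∩ B, i.e., P_A(x) ∈ A ∩ B and ‖P_A(x)‖ = inf_{y ∈ A∩B} ‖y‖. -/
open RealInnerProductSpace

lemma var_ineq {H : Type*} [NormedAddCommGroup H] [InnerProductSpace ℝ H]
    {K : Set H} (hK : Convex ℝ K) {p u : H} (hp : p ∈ K)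
    (hmin : ∀ c ∈ K, ‖u - p‖ ≤ ‖u - c‖) : ∀ w ∈ K, ⟪u - p, w - p⟫ ≤ 0 := by
  rw [← norm_eq_iInf_iff_real_inner_le_zero hK hp]
  haveI : Nonempty K := ⟨⟨p, hp⟩⟩
  refine le_antisymm ?_ (ciInf_le (f := fun w : K => ‖u - w‖) ⟨0, fun _ ⟨_, h⟩ => h ▸ norm_nonneg _⟩ ⟨p, hp⟩)
  exact le_ciInf fun w => hmin w w.2

/-- If `x` is a fixed point of the AAMR operator `T_{A,B,α,β}`, then
`A ∩ B ≠ ∅` and `P_A(x)` is the projection of `0` onto `A ∩ B`. -/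
theorem stmt_4 {H : Type*} [NormedAddCommGroup H] [InnerProductSpace ℝ H] [CompleteSpace H]
    (A B : Set H) (hAne : A.Nonempty) (hAc : IsClosed A) (hAv : Convex ℝ A)
    (hBne : B.Nonempty) (hBc : IsClosed B) (hBv : Convex ℝ B)
    (PA PB : H → H)
    (hPA : ∀ x, PA x ∈ A ∧ ∀ c ∈ A, ‖x - PA x‖ ≤ ‖x - c‖)
    (hPB : ∀ x, PB x ∈ B ∧ ∀ c ∈ B, ‖x - PB x‖ ≤ ‖x - c‖)
    (α β : ℝ) (hα : α ∈ Set.Ioo (0 : ℝ) 1) (hβ : β ∈ Set.Ioo (0 : ℝ) 1)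
    (T : H → H)
    (hT : ∀ x, T x =
      (1 - α) • x + α • ((2 * β) • PB ((2 * β) • PA x - x) - ((2 * β) • PA x - x)))
    (x : H) (hx : T x = x) :
    (A ∩ B).Nonempty ∧ PA x ∈ A ∩ B ∧ ∀ y ∈ A ∩ B, ‖PA x‖ ≤ ‖y‖ := by
  set p := PA x with hp
  set z := (2 * β) • p - x with hz
  set q := PB z with hq
  have hα0 : (0:ℝ) < α := hα.1
  have hβ0 : (0:ℝ) < β := hβ.1
  have h2β : (2 * β) ≠ 0 := by positivity
  -- fixed point equation gives q = p
  have key : (2 * β) • q - z = x := by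
    have h := (hT x).symm.trans hx
    have : α • ((2 * β) • q - z) = α • x := by
      have := congrArg (fun v => v - (1 - α) • x) h
      simp only [add_sub_cancel_left] at this
      rw [this]
      module
    exact smul_right_injective H (ne_of_gt hα0) this
  have hqp : q = p := by
    have : (2 * β) • q = (2 * β) • p := by
      have := congrArg (fun v => v + z) key
      simp only [sub_add_cancel] at this
      rw [this, hz]; abel
    exact smul_right_injective H h2β this
  have hpA : p ∈ A := (hPA x).1
  have hpB : p ∈ B := hqp ▸ (hPB z).1
  have hpAB : p ∈ A ∩ B := ⟨hpA, hpB⟩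
  refine ⟨⟨p, hpAB⟩, hpAB, ?_⟩
  intro y hy
  have hA' : ⟪x - p, y - p⟫ ≤ 0 := var_ineq hAv hpA (hPA x).2 y hy.1
  have hB' : ⟪z - p, y - p⟫ ≤ 0 := by
    have := var_ineq hBv (hPB z).1 (hPB z).2 y hy.2
    rwa [← hq, hqp] at this
  -- sum: (2β - 2) ⟪p, y - p⟫ ≤ 0
  have hsum : (2 * β - 2) * ⟪p, y - p⟫ ≤ 0 := by
    have : (x - p) + (z - p) = (2 * β - 2) • p := by rw [hz]; module
    calc (2 * β - 2) * ⟪p, y - p⟫ = ⟪(x - p) + (z - p), y - p⟫ := by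
          rw [this, real_inner_smul_left]
      _ = ⟪x - p, y - p⟫ + ⟪z - p, y - p⟫ := inner_add_left _ _ _
      _ ≤ 0 := add_nonpos hA' hB'
  have hineq : 0 ≤ ⟪p, y - p⟫ := by
    have hneg : 2 * β - 2 < 0 := by linarith [hβ.2]
    nlinarith [hsum]
  have h1 : ‖p‖ ^ 2 ≤ ⟪p, y⟫ := by
    have := real_inner_self_eq_norm_sq p
    have h2 : ⟪p, y - p⟫ = ⟪p, y⟫ - ⟪p, p⟫ := inner_sub_right _ _ _
    nlinarith
  have h3 : ⟪p, y⟫ ≤ ‖p‖ * ‖y‖ := real_inner_le_norm p y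
  nlinarith [norm_nonneg p, norm_nonneg y]
end

section
/- Let H be a real Hilbert space, let A, B ⊆ H be nonempty closed convex sets, and let α, β ∈ (0, 1). Then the AAMR operator T_{A,B,α,β} has a fixed point if and only if A ∩ B ≠ ∅ and −P_{A∩B}(0) ∈ N_A(P_{A∩B}(0)) + N_B(P_{A∩B}(0)). -/
open RealInnerProductSpace Pointwise

/-- The normal cone to a convex set `C` at `x` (empty when `x ∉ C`). -/
def normalCone {H : Type*} [NormedAddCommGroup H] [InnerProductSpace ℝ H]
    (C : Set H) (x : H) : Set H :=
  {u | x ∈ C ∧ ∀ c ∈ C, ⟪u, c - x⟫ ≤ 0}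

lemma mem_normalCone_iff {H : Type*} [NormedAddCommGroup H] [InnerProductSpace ℝ H]
    {C : Set H} {x u : H} :
    u ∈ normalCone C x ↔ x ∈ C ∧ ∀ c ∈ C, ⟪u, c - x⟫ ≤ 0 := Iff.rfl

/-- Variational characterization of nearest points in a convex set. -/
lemma min_iff_var {H : Type*} [NormedAddCommGroup H] [InnerProductSpace ℝ H]
    {C : Set H} (hC : Convex ℝ C) {x p : H} (hp : p ∈ C) :
    (∀ c ∈ C, ‖x - p‖ ≤ ‖x - c‖) ↔ ∀ c ∈ C, ⟪x - p, c - p⟫ ≤ 0 := by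
  rw [← norm_eq_iInf_iff_real_inner_le_zero hC hp]
  haveI : Nonempty C := ⟨⟨p, hp⟩⟩
  have hbdd : BddBelow (Set.range fun w : C => ‖x - (w : H)‖) := by
    refine ⟨0, ?_⟩
    rintro _ ⟨w, rfl⟩
    positivity
  constructor
  · intro h
    exact le_antisymm (le_ciInf fun w => h w w.2) (ciInf_le hbdd ⟨p, hp⟩)
  · intro h c hc
    calc ‖x - p‖ = ⨅ w : C, ‖x - (w : H)‖ := h
      _ ≤ ‖x - c‖ := ciInf_le hbdd ⟨c, hc⟩

/-- Uniqueness of points satisfying the variational inequality. -/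
lemma var_unique {H : Type*} [NormedAddCommGroup H] [InnerProductSpace ℝ H]
    {C : Set H} {x p q : H} (hp : p ∈ C) (hq : q ∈ C)
    (h1 : ∀ c ∈ C, ⟪x - p, c - p⟫ ≤ 0) (h2 : ∀ c ∈ C, ⟪x - q, c - q⟫ ≤ 0) : p = q := by
  have h3 := h1 q hq
  have h4 := h2 p hp
  have h4' : (0 : ℝ) ≤ ⟪x - q, q - p⟫ := by
    rw [show p - q = -(q - p) by abel, inner_neg_right] at h4
    linarith
  have key : ⟪q - p, q - p⟫ ≤ 0 := by
    have e1 : ⟪x - p, q - p⟫ - ⟪x - q, q - p⟫ = ⟪q - p, q - p⟫ := by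
      rw [← inner_sub_left]
      congr 1
      abel
    linarith
  have : q - p = 0 := by
    have := real_inner_self_nonpos.mp key
    exact this
  have : q = p := by rwa [sub_eq_zero] at this
  exact this.symm

lemma smul_mem_normalCone {H : Type*} [NormedAddCommGroup H] [InnerProductSpace ℝ H]
    {C : Set H} {p u : H} {c : ℝ} (hc : 0 ≤ c) (hu : u ∈ normalCone C p) :
    c • u ∈ normalCone C p := by
  refine ⟨hu.1, fun y hy => ?_⟩
  rw [real_inner_smul_left]
  exact mul_nonpos_iff.mpr (Or.inl ⟨hc, hu.2 y hy⟩)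

/-- If `-p` belongs to the sum of normal cones at `p`, then `p` is the minimum-norm
point of `A ∩ B`. -/
lemma minnorm_of_cone {H : Type*} [NormedAddCommGroup H] [InnerProductSpace ℝ H]
    {A B : Set H} {p : H}
    (h : -p ∈ normalCone A p + normalCone B p) : ∀ y ∈ A ∩ B, ‖p‖ ≤ ‖y‖ := by
  rintro y ⟨hyA, hyB⟩
  obtain ⟨u, hu, v, hv, huv⟩ := Set.mem_add.mp h
  have h1 : ⟪-p, y - p⟫ ≤ 0 := by
    rw [← huv, inner_add_left]
    exact add_nonpos (hu.2 y hyA) (hv.2 y hyB)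
  have h2 : ‖p‖ ^ 2 ≤ ⟪p, y⟫ := by
    rw [inner_neg_left, inner_sub_right] at h1
    have : ⟪p, p⟫ = ‖p‖ ^ 2 := real_inner_self_eq_norm_sq p
    linarith
  have h3 : ⟪p, y⟫ ≤ ‖p‖ * ‖y‖ := real_inner_le_norm p y
  by_cases hp0 : ‖p‖ = 0
  · rw [hp0]; exact norm_nonneg y
  · have hpos : 0 < ‖p‖ := lt_of_le_of_ne (norm_nonneg p) (Ne.symm hp0)
    nlinarith

/-- The AAMR operator `T_{A,B,α,β}` has a fixed point if and only if
`A ∩ B ≠ ∅` and `−P_{A∩B}(0) ∈ N_A(P_{A∩B}(0)) + N_B(P_{A∩B}(0))`; here `P_{A∩B}(0)`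
is encoded as the point `p ∈ A ∩ B` of minimum norm. -/
theorem stmt_5 {H : Type*} [NormedAddCommGroup H] [InnerProductSpace ℝ H] [CompleteSpace H]
    (A B : Set H) (hAne : A.Nonempty) (hAc : IsClosed A) (hAv : Convex ℝ A)
    (hBne : B.Nonempty) (hBc : IsClosed B) (hBv : Convex ℝ B)
    (PA PB : H → H)
    (hPA : ∀ x, PA x ∈ A ∧ ∀ c ∈ A, ‖x - PA x‖ ≤ ‖x - c‖)
    (hPB : ∀ x, PB x ∈ B ∧ ∀ c ∈ B, ‖x - PB x‖ ≤ ‖x - c‖)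
    (α β : ℝ) (hα : α ∈ Set.Ioo (0 : ℝ) 1) (hβ : β ∈ Set.Ioo (0 : ℝ) 1)
    (T : H → H)
    (hT : ∀ x, T x =
      (1 - α) • x + α • ((2 * β) • PB ((2 * β) • PA x - x) - ((2 * β) • PA x - x))) :
    (∃ x, T x = x) ↔
      ∃ p, (p ∈ A ∩ B ∧ ∀ y ∈ A ∩ B, ‖p‖ ≤ ‖y‖) ∧
        -p ∈ normalCone A p + normalCone B p := by
  obtain ⟨hα0, hα1⟩ := hα
  obtain ⟨hβ0, hβ1⟩ := hβ
  have h2β : (2 * β : ℝ) ≠ 0 := by positivity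
  have hcpos : (0 : ℝ) < 2 - 2 * β := by linarith
  constructor
  · rintro ⟨x, hx⟩
    set y : H := (2 * β) • PA x - x with hy
    set p : H := PA x with hpdef
    -- algebra: from fixed point, PB y = p
    have h0 : (1 - α) • x + α • ((2 * β) • PB y - y) = x := (hT x).symm.trans hx
    have h1 : α • (((2 * β) • PB y - y) - x) = 0 := by
      calc α • (((2 * β) • PB y - y) - x)
          = ((1 - α) • x + α • ((2 * β) • PB y - y)) - x := by module
        _ = 0 := by rw [h0]; simp
    have h2 : ((2 * β) • PB y - y) - x = 0 :=
      (smul_eq_zero.mp h1).resolve_left (ne_of_gt hα0)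
    have h2' : (2 * β) • PB y - y = x := by rwa [sub_eq_zero] at h2
    have h3 : (2 * β) • PB y = (2 * β) • p := by
      calc (2 * β) • PB y = ((2 * β) • PB y - y) + y := by abel
        _ = x + ((2 * β) • p - x) := by rw [h2']
        _ = (2 * β) • p := by abel
    have hPBy : PB y = p := smul_right_injective H h2β h3
    have hpA : p ∈ A := (hPA x).1
    have hpB : p ∈ B := hPBy ▸ (hPB y).1
    -- normal cone memberships
    have hu : x - p ∈ normalCone A p :=
      ⟨hpA, (min_iff_var hAv hpA).mp (hPA x).2⟩
    have hv : y - p ∈ normalCone B p := by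
      refine ⟨hpB, ?_⟩
      have := (hPB y).2
      rw [hPBy] at this
      exact (min_iff_var hBv hpB).mp this
    have hu' := smul_mem_normalCone (le_of_lt (inv_pos.mpr hcpos)) hu
    have hv' := smul_mem_normalCone (le_of_lt (inv_pos.mpr hcpos)) hv
    have hsum : (2 - 2 * β)⁻¹ • (x - p) + (2 - 2 * β)⁻¹ • (y - p) = -p := by
      have huv : (x - p) + (y - p) = (2 * β - 2) • p := by
        rw [hy]
        module
      rw [← smul_add, huv, smul_smul]
      rw [show (2 - 2 * β)⁻¹ * (2 * β - 2) = -1 by field_simp; ring]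
      module
    have hcone : -p ∈ normalCone A p + normalCone B p := by
      rw [← hsum]
      exact Set.add_mem_add hu' hv'
    exact ⟨p, ⟨⟨hpA, hpB⟩, minnorm_of_cone hcone⟩, hcone⟩
  · rintro ⟨p, ⟨⟨hpA, hpB⟩, _⟩, hcone⟩
    obtain ⟨u', hu', v', hv', huv⟩ := Set.mem_add.mp hcone
    set c : ℝ := 2 - 2 * β with hc
    set u : H := c • u' with hu
    set v : H := c • v' with hv
    set x : H := p + u with hx
    -- PA x = p
    have hvarA : ∀ a ∈ A, ⟪x - p, a - p⟫ ≤ 0 := by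
      intro a ha
      rw [hx, show p + u - p = u by abel, hu, real_inner_smul_left]
      exact mul_nonpos_iff.mpr (Or.inl ⟨le_of_lt hcpos, hu'.2 a ha⟩)
    have hPAx : PA x = p :=
      var_unique (hPA x).1 hpA ((min_iff_var hAv (hPA x).1).mp (hPA x).2) hvarA
    set y : H := (2 * β) • p - x with hy
    have hyp : y - p = v := by
      have huvc : u + v = (2 * β - 2) • p := by
        rw [hu, hv, ← smul_add, huv, hc]
        module
      have : y - p = (2 * β - 2) • p - u := by rw [hy, hx]; module
      rw [this, ← huvc]
      abel
    have hvarB : ∀ b ∈ B, ⟪y - p, b - p⟫ ≤ 0 := by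
      intro b hb
      rw [hyp, hv, real_inner_smul_left]
      exact mul_nonpos_iff.mpr (Or.inl ⟨le_of_lt hcpos, hv'.2 b hb⟩)
    have hPBy : PB y = p :=
      var_unique (hPB y).1 hpB ((min_iff_var hBv (hPB y).1).mp (hPB y).2) hvarB
    refine ⟨x, ?_⟩
    rw [hT x, hPAx, ← hy, hPBy]
    rw [hy]
    module
end

section
/- Let H be a real Hilbert space, let A, B ⊆ H be nonempty closed convex sets, let α, β ∈ (0, 1), and let q ∈ H. Then the AAMR operator T_{A−q,B−q,α,β} (for the translated sets A − q and B − q) has a fixed point if and only if A ∩ B ≠ ∅ and q − P_{A∩B}(q) ∈ N_A(P_{A∩B}(q)) + N_B(P_{A∩B}(q)). -/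
open RealInnerProductSpace Pointwise

section Aux

variable {H : Type*} [NormedAddCommGroup H] [InnerProductSpace ℝ H]

lemma aamr_mem_sub_singleton {A : Set H} {q x : H} : x ∈ A - {q} ↔ x + q ∈ A := by
  simp only [Set.mem_sub, Set.mem_singleton_iff]
  constructor
  · rintro ⟨a, ha, b, rfl, rfl⟩; simpa using ha
  · intro h; exact ⟨x + q, h, q, rfl, by abel⟩

lemma aamr_near_of_inner {C : Set H} {x u : H}
    (h : ∀ c ∈ C, ⟪x - u, c - u⟫ ≤ 0) : ∀ c ∈ C, ‖x - u‖ ≤ ‖x - c‖ := by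
  intro c hc
  have hxc : x - c = (x - u) - (c - u) := by abel
  have hsq : ‖x - c‖ ^ 2 = ‖x - u‖ ^ 2 - 2 * ⟪x - u, c - u⟫ + ‖c - u‖ ^ 2 := by
    rw [hxc, norm_sub_sq_real]
  nlinarith [h c hc, sq_nonneg ‖c - u‖, norm_nonneg (x - u), norm_nonneg (x - c)]

lemma aamr_inner_of_near {C : Set H} (hC : Convex ℝ C) {x u : H} (hu : u ∈ C)
    (h : ∀ c ∈ C, ‖x - u‖ ≤ ‖x - c‖) : ∀ c ∈ C, ⟪x - u, c - u⟫ ≤ 0 := by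
  haveI : Nonempty C := ⟨⟨u, hu⟩⟩
  have heq : ‖x - u‖ = ⨅ w : C, ‖x - w‖ := by
    apply le_antisymm
    · exact le_ciInf fun w => h w w.2
    · have hbdd : BddBelow (Set.range fun w : C => ‖x - (w : H)‖) := by
        refine ⟨0, ?_⟩
        rintro r ⟨w, rfl⟩
        exact norm_nonneg _
      exact ciInf_le hbdd ⟨u, hu⟩
  exact (norm_eq_iInf_iff_real_inner_le_zero hC hu).mp heq

lemma aamr_proj_unique {x u u' : H}
    (h : ⟪x - u, u' - u⟫ ≤ 0) (h' : ⟪x - u', u - u'⟫ ≤ 0) : u = u' := by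
  have h2 : ⟪x - u', u' - u⟫ = -⟪x - u', u - u'⟫ := by
    rw [← inner_neg_right]; congr 1; abel
  have h1 : ⟪(x - u) - (x - u'), u' - u⟫ ≤ 0 := by
    rw [inner_sub_left]; linarith
  have h3 : (x - u) - (x - u') = u' - u := by abel
  rw [h3, real_inner_self_eq_norm_sq] at h1
  have h4 : ‖u' - u‖ = 0 := by nlinarith [norm_nonneg (u' - u)]
  have h5 : u' - u = 0 := norm_eq_zero.mp h4
  have := sub_eq_zero.mp h5
  exact this.symm

lemma aamr_smul_mem_normalCone {C : Set H} {p n : H} (hn : n ∈ normalCone C p) {t : ℝ}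
    (ht : 0 ≤ t) : t • n ∈ normalCone C p := by
  refine ⟨hn.1, fun c hc => ?_⟩
  rw [real_inner_smul_left]
  have := hn.2 c hc
  nlinarith

end Aux

/-- The AAMR operator `T_{A−q,B−q,α,β}` has a fixed point if and only if
`A ∩ B ≠ ∅` and `q − P_{A∩B}(q) ∈ N_A(P_{A∩B}(q)) + N_B(P_{A∩B}(q))`; here `P_{A∩B}(q)`
is encoded as the point `p ∈ A ∩ B` nearest to `q`. -/
theorem stmt_6 {H : Type*} [NormedAddCommGroup H] [InnerProductSpace ℝ H] [CompleteSpace H]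
    (A B : Set H) (hAne : A.Nonempty) (hAc : IsClosed A) (hAv : Convex ℝ A)
    (hBne : B.Nonempty) (hBc : IsClosed B) (hBv : Convex ℝ B)
    (q : H) (PAq PBq : H → H)
    (hPAq : ∀ x, PAq x ∈ A - {q} ∧ ∀ c ∈ A - {q}, ‖x - PAq x‖ ≤ ‖x - c‖)
    (hPBq : ∀ x, PBq x ∈ B - {q} ∧ ∀ c ∈ B - {q}, ‖x - PBq x‖ ≤ ‖x - c‖)
    (α β : ℝ) (hα : α ∈ Set.Ioo (0 : ℝ) 1) (hβ : β ∈ Set.Ioo (0 : ℝ) 1)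
    (T : H → H)
    (hT : ∀ x, T x =
      (1 - α) • x + α • ((2 * β) • PBq ((2 * β) • PAq x - x) - ((2 * β) • PAq x - x))) :
    (∃ x, T x = x) ↔
      ∃ p, (p ∈ A ∩ B ∧ ∀ y ∈ A ∩ B, ‖q - p‖ ≤ ‖q - y‖) ∧
        q - p ∈ normalCone A p + normalCone B p := by
  obtain ⟨hα0, hα1⟩ := hα
  obtain ⟨hβ0, hβ1⟩ := hβ
  have hA'v : Convex ℝ (A - {q}) := hAv.sub (convex_singleton q)
  have hB'v : Convex ℝ (B - {q}) := hBv.sub (convex_singleton q)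
  have h2β : (2 * β : ℝ) ≠ 0 := by positivity
  have h2mβ : (0:ℝ) < 2 - 2 * β := by linarith
  constructor
  · rintro ⟨x, hx⟩
    set u := PAq x with hu_def
    set y := (2 * β) • u - x with hy_def
    have hxT := hT x
    rw [hx] at hxT
    -- from the fixed point equation: (2β)•PBq y - y = x
    have hst : (2 * β) • PBq y - y = x := by
      have h1 : α • ((2 * β) • PBq y - y) - α • x
          = ((1 - α) • x + α • ((2 * β) • PBq y - y)) - x := by module
      rw [← hxT, sub_self] at h1
      have h2 : α • ((2 * β) • PBq y - y) = α • x := by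
        have := sub_eq_zero.mp h1
        exact this
      exact smul_right_injective H (ne_of_gt hα0) h2
    -- hence PBq y = u
    have hPBu : PBq y = u := by
      have h1 : (2 * β) • PBq y = (2 * β) • u := by
        have : (2 * β) • PBq y = x + y := by rw [← hst]; abel
        rw [this, hy_def]; abel
      exact smul_right_injective H h2β h1
    set p := u + q with hp_def
    have hpA : p ∈ A := aamr_mem_sub_singleton.mp (hPAq x).1
    have hpB : p ∈ B := by
      have := (hPBq y).1
      rw [hPBu] at this
      exact aamr_mem_sub_singleton.mp this
    -- normal cone memberships
    have hnA : (x - u) ∈ normalCone A p := by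
      refine ⟨hpA, fun c hc => ?_⟩
      have h1 := aamr_inner_of_near hA'v (hPAq x).1 (hPAq x).2 (c - q)
        (aamr_mem_sub_singleton.mpr (by simpa using hc))
      have h2 : (c - q) - u = c - p := by rw [hp_def]; abel
      rwa [h2] at h1
    have hnB : (y - u) ∈ normalCone B p := by
      refine ⟨hpB, fun c hc => ?_⟩
      have h0 := (hPBq y).2
      have h1 := aamr_inner_of_near hB'v (hPBq y).1 h0 (c - q)
        (aamr_mem_sub_singleton.mpr (by simpa using hc))
      rw [hPBu] at h1
      have h2 : (c - q) - u = c - p := by rw [hp_def]; abel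
      rwa [h2] at h1
    set t : ℝ := (2 - 2 * β)⁻¹ with ht_def
    have ht0 : 0 < t := by positivity
    have key : q - p = t • (x - u) + t • (y - u) := by
      have h1 : t • (x - u) + t • (y - u) = (t * (2 * β - 2)) • u := by
        rw [hy_def]; module
      have h2 : t * (2 * β - 2) = -1 := by
        rw [ht_def]; field_simp; ring
      rw [h1, h2, hp_def]; module
    have hmemA : t • (x - u) ∈ normalCone A p := aamr_smul_mem_normalCone hnA ht0.le
    have hmemB : t • (y - u) ∈ normalCone B p := aamr_smul_mem_normalCone hnB ht0.le
    refine ⟨p, ⟨⟨hpA, hpB⟩, ?_⟩, ?_⟩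
    · -- nearest point
      apply aamr_near_of_inner
      intro c hc
      rw [key, inner_add_left]
      have := hmemA.2 c hc.1
      have := hmemB.2 c hc.2
      linarith
    · rw [key]
      exact Set.add_mem_add hmemA hmemB
  · rintro ⟨p, ⟨⟨hpA, hpB⟩, _hnear⟩, hsum⟩
    rw [Set.mem_add] at hsum
    obtain ⟨nA, hnA, nB, hnB, hsumEq⟩ := hsum
    set u : H := p - q with hu_def
    have huq : u + q = p := by rw [hu_def]; abel
    have huA : u ∈ A - {q} := aamr_mem_sub_singleton.mpr (by rw [huq]; exact hpA)
    have huB : u ∈ B - {q} := aamr_mem_sub_singleton.mpr (by rw [huq]; exact hpB)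
    set x : H := u + (2 - 2 * β) • nA with hx_def
    set y : H := (2 * β) • u - x with hy_def
    -- inner condition characterizing u as projection onto A - {q} of x
    have hinnA : ∀ c ∈ A - {q}, ⟪x - u, c - u⟫ ≤ 0 := by
      intro c hc
      have hcp : c + q ∈ A := aamr_mem_sub_singleton.mp hc
      have h1 := hnA.2 (c + q) hcp
      have h2 : x - u = (2 - 2 * β) • nA := by rw [hx_def]; abel
      have h3 : (c + q) - p = c - u := by rw [hu_def]; abel
      rw [h3] at h1
      rw [h2, real_inner_smul_left]
      nlinarith
    have hPAu : PAq x = u := by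
      have hproj := aamr_inner_of_near hA'v (hPAq x).1 (hPAq x).2
      exact aamr_proj_unique (hproj u huA) (hinnA (PAq x) (hPAq x).1)
    -- y = u + (2 - 2β) • nB
    have hyval : y = u + (2 - 2 * β) • nB := by
      have hnBval : nB = (q - p) - nA := by rw [← hsumEq]; abel
      rw [hy_def, hx_def, hnBval, hu_def]; module
    have hinnB : ∀ c ∈ B - {q}, ⟪y - u, c - u⟫ ≤ 0 := by
      intro c hc
      have hcp : c + q ∈ B := aamr_mem_sub_singleton.mp hc
      have h1 := hnB.2 (c + q) hcp
      have h2 : y - u = (2 - 2 * β) • nB := by rw [hyval]; abel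
      have h3 : (c + q) - p = c - u := by rw [hu_def]; abel
      rw [h3] at h1
      rw [h2, real_inner_smul_left]
      nlinarith
    have hPBu : PBq y = u := by
      have hproj := aamr_inner_of_near hB'v (hPBq y).1 (hPBq y).2
      exact aamr_proj_unique (hproj u huB) (hinnB (PBq y) (hPBq y).1)
    refine ⟨x, ?_⟩
    rw [hT x, hPAu, ← hy_def, hPBu, hy_def]
    module
end

section
/- Let H be a real Hilbert space, let A, B ⊆ H be nonempty closed convex sets, and let α, β ∈ (0, 1]. Then: (i) if P_A(0) ∈ B, then (2β − 1)P_A(0) is a fixed point of the AAMR operator T_{A,B,α,β}; and (ii) if P_B(0) ∈ A, then P_B(0) is a fixed point of T_{A,B,α,β}. -/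
open RealInnerProductSpace

private lemma min_VI {H : Type*} [NormedAddCommGroup H] [InnerProductSpace ℝ H]
    {S : Set H} (hS : Convex ℝ S) {x p : H} (hp : p ∈ S)
    (hmin : ∀ c ∈ S, ‖x - p‖ ≤ ‖x - c‖) : ∀ c ∈ S, ⟪x - p, c - p⟫ ≤ 0 := by
  rw [← norm_eq_iInf_iff_real_inner_le_zero hS hp]
  have : Nonempty S := ⟨⟨p, hp⟩⟩
  apply le_antisymm
  · exact le_ciInf fun w => hmin w w.2
  · have : BddBelow (Set.range fun w : S => ‖x - w‖) := by
      refine ⟨0, ?_⟩; rintro y ⟨w, rfl⟩; exact norm_nonneg _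
    exact ciInf_le this ⟨p, hp⟩

private lemma VI_eq {H : Type*} [NormedAddCommGroup H] [InnerProductSpace ℝ H]
    {S : Set H} {x p q : H} (hp : p ∈ S) (hq : q ∈ S)
    (h1 : ∀ c ∈ S, ⟪x - p, c - p⟫ ≤ 0) (h2 : ∀ c ∈ S, ⟪x - q, c - q⟫ ≤ 0) : p = q := by
  have a := h1 q hq
  have b := h2 p hp
  have : ⟪q - p, q - p⟫ ≤ 0 := by
    have : ⟪x - p, q - p⟫ + ⟪x - q, p - q⟫ ≤ 0 := by linarith
    have e : ⟪x - p, q - p⟫ + ⟪x - q, p - q⟫ = ⟪q - p, q - p⟫ := by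
      simp only [inner_sub_left, inner_sub_right, real_inner_comm p q, real_inner_comm x p,
        real_inner_comm x q]
      ring
    linarith [e ▸ this]
  have := real_inner_self_nonpos.mp this
  have : q - p = 0 := this
  have : q = p := by rwa [sub_eq_zero] at this
  exact this.symm

/-- Projection of `t • (proj of 0)` for `t ≤ 1` is still `proj of 0`. -/
private lemma proj_smul {H : Type*} [NormedAddCommGroup H] [InnerProductSpace ℝ H]
    {S : Set H} (hS : Convex ℝ S) (P : H → H)
    (hP : ∀ x, P x ∈ S ∧ ∀ c ∈ S, ‖x - P x‖ ≤ ‖x - c‖) {t : ℝ} (ht : t ≤ 1) :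
    P (t • P 0) = P 0 := by
  set p := P 0 with hp
  have hpS : p ∈ S := (hP 0).1
  have VI0 : ∀ c ∈ S, ⟪(0 : H) - p, c - p⟫ ≤ 0 := min_VI hS hpS (hP 0).2
  have VIp : ∀ c ∈ S, ⟪t • p - p, c - p⟫ ≤ 0 := by
    intro c hc
    have := VI0 c hc
    rw [zero_sub, inner_neg_left] at this
    have : 0 ≤ ⟪p, c - p⟫ := by linarith
    have : ⟪t • p - p, c - p⟫ = (t - 1) * ⟪p, c - p⟫ := by
      rw [show t • p - p = (t - 1) • p by rw [sub_smul, one_smul], real_inner_smul_left]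
    rw [this]
    exact mul_nonpos_of_nonpos_of_nonneg (by linarith) ‹0 ≤ ⟪p, c - p⟫›
  exact VI_eq (hP (t • p)).1 hpS
    (min_VI hS (hP (t • p)).1 (hP (t • p)).2) VIp

private lemma proj_mem {H : Type*} [NormedAddCommGroup H] [InnerProductSpace ℝ H]
    {S : Set H} (hS : Convex ℝ S) (P : H → H)
    (hP : ∀ x, P x ∈ S ∧ ∀ c ∈ S, ‖x - P x‖ ≤ ‖x - c‖) {x : H} (hx : x ∈ S) :
    P x = x := by
  refine VI_eq (hP x).1 hx (min_VI hS (hP x).1 (hP x).2) ?_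
  intro c hc; simp

/-- For `α, β ∈ (0,1]`: (i) if `P_A(0) ∈ B` then `(2β−1)P_A(0)` is a
fixed point of `T_{A,B,α,β}`; (ii) if `P_B(0) ∈ A` then `P_B(0)` is a fixed point. -/
theorem stmt_7 {H : Type*} [NormedAddCommGroup H] [InnerProductSpace ℝ H] [CompleteSpace H]
    (A B : Set H) (hAne : A.Nonempty) (hAc : IsClosed A) (hAv : Convex ℝ A)
    (hBne : B.Nonempty) (hBc : IsClosed B) (hBv : Convex ℝ B)
    (PA PB : H → H)
    (hPA : ∀ x, PA x ∈ A ∧ ∀ c ∈ A, ‖x - PA x‖ ≤ ‖x - c‖)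
    (hPB : ∀ x, PB x ∈ B ∧ ∀ c ∈ B, ‖x - PB x‖ ≤ ‖x - c‖)
    (α β : ℝ) (hα : α ∈ Set.Ioc (0 : ℝ) 1) (hβ : β ∈ Set.Ioc (0 : ℝ) 1)
    (T : H → H)
    (hT : ∀ x, T x =
      (1 - α) • x + α • ((2 * β) • PB ((2 * β) • PA x - x) - ((2 * β) • PA x - x))) :
    (PA 0 ∈ B → T ((2 * β - 1) • PA 0) = (2 * β - 1) • PA 0) ∧
    (PB 0 ∈ A → T (PB 0) = PB 0) := by
  have hβ1 : 2 * β - 1 ≤ 1 := by linarith [hβ.2]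
  constructor
  · intro hmem
    set p := PA 0 with hp
    have h1 : PA ((2 * β - 1) • p) = p := proj_smul hAv PA hPA hβ1
    rw [hT]
    rw [h1]
    have h2 : (2 * β) • p - (2 * β - 1) • p = p := by
      rw [← sub_smul]; ring_nf; rw [one_smul]
    rw [h2, proj_mem hBv PB hPB hmem]
    rw [show (2 * β) • p - p = (2 * β - 1) • p by rw [sub_smul, one_smul]]
    rw [← add_smul]; ring_nf; rw [one_smul]
  · intro hmem
    set q := PB 0 with hq
    have h1 : PA q = q := proj_mem hAv PA hPA hmem
    rw [hT, h1]
    have h2 : PB ((2 * β) • q - q) = q := by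
      rw [show (2 * β) • q - q = (2 * β - 1) • q by rw [sub_smul, one_smul]]
      exact proj_smul hBv PB hPB hβ1
    rw [h2]
    rw [show (2 * β) • q - ((2 * β) • q - q) = q by abel]
    rw [← add_smul]; ring_nf; rw [one_smul]
end

section
/- Let H be a real Hilbert space, let A, B ⊆ H be nonempty closed convex sets, and let α, β ∈ (0, 1]. If P_A(0) = P_B(0), then for every λ ∈ [0, 1], the point (1 − 2λ(1 − β))P_A(0) is a fixed point of the AAMR operator T_{A,B,α,β}. -/
open RealInnerProductSpace

/-- Uniqueness-style lemma: if `P` is a metric projector onto a convex set `C` and `p ∈ C`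
satisfies the variational inequality at `x`, then `P x = p`. -/
lemma proj_eq_of_inner {H : Type*} [NormedAddCommGroup H] [InnerProductSpace ℝ H]
    {C : Set H} (hC : Convex ℝ C) (P : H → H)
    (hP : ∀ x, P x ∈ C ∧ ∀ c ∈ C, ‖x - P x‖ ≤ ‖x - c‖)
    {x p : H} (hp : p ∈ C) (hvar : ∀ c ∈ C, ⟪x - p, c - p⟫ ≤ 0) : P x = p := by
  have hnonempty : Nonempty C := ⟨⟨p, hp⟩⟩
  have hbdd : BddBelow (Set.range fun w : C => ‖x - w‖) :=
    ⟨0, fun _ ⟨_, h⟩ => h ▸ norm_nonneg _⟩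
  -- P x satisfies the variational inequality too
  have hinf : ‖x - P x‖ = ⨅ w : C, ‖x - w‖ := by
    apply le_antisymm
    · exact le_ciInf fun w => (hP x).2 w w.2
    · exact ciInf_le hbdd ⟨P x, (hP x).1⟩
  have h1 : ∀ c ∈ C, ⟪x - P x, c - P x⟫ ≤ 0 :=
    (norm_eq_iInf_iff_real_inner_le_zero hC (hP x).1).mp hinf
  have h2 := hvar (P x) (hP x).1
  have h3 := h1 p hp
  have : ⟪p - P x, p - P x⟫ ≤ 0 := by
    have e1 : ⟪p - P x, p - P x⟫ = ⟪x - P x, p - P x⟫ + ⟪x - p, P x - p⟫ := by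
      rw [show p - P x = (x - P x) - (x - p) from by abel, inner_sub_left,
        show P x - p = -((x - P x) - (x - p)) from by abel, inner_neg_right]
      ring
    rw [e1]; exact add_nonpos h3 h2
  have : p - P x = 0 := by
    have := real_inner_self_nonneg (x := p - P x)
    have h0 : ⟪p - P x, p - P x⟫ = 0 := le_antisymm ‹_› ‹_›
    exact inner_self_eq_zero.mp h0
  have := sub_eq_zero.mp this
  exact this.symm

/-- For `α, β ∈ (0,1]`, if `P_A(0) = P_B(0)`, then for every `λ ∈ [0,1]`,
the point `(1 − 2λ(1−β))P_A(0)` is a fixed point of the AAMR operator `T_{A,B,α,β}`. -/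
theorem stmt_8 {H : Type*} [NormedAddCommGroup H] [InnerProductSpace ℝ H] [CompleteSpace H]
    (A B : Set H) (hAne : A.Nonempty) (hAc : IsClosed A) (hAv : Convex ℝ A)
    (hBne : B.Nonempty) (hBc : IsClosed B) (hBv : Convex ℝ B)
    (PA PB : H → H)
    (hPA : ∀ x, PA x ∈ A ∧ ∀ c ∈ A, ‖x - PA x‖ ≤ ‖x - c‖)
    (hPB : ∀ x, PB x ∈ B ∧ ∀ c ∈ B, ‖x - PB x‖ ≤ ‖x - c‖)
    (α β : ℝ) (hα : α ∈ Set.Ioc (0 : ℝ) 1) (hβ : β ∈ Set.Ioc (0 : ℝ) 1)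
    (T : H → H)
    (hT : ∀ x, T x =
      (1 - α) • x + α • ((2 * β) • PB ((2 * β) • PA x - x) - ((2 * β) • PA x - x)))
    (heq : PA 0 = PB 0) :
    ∀ lam ∈ Set.Icc (0 : ℝ) 1,
      T ((1 - 2 * lam * (1 - β)) • PA 0) = (1 - 2 * lam * (1 - β)) • PA 0 := by
  intro lam hlam
  set p := PA 0 with hp
  -- variational inequality for p as projection of 0 onto A, and onto B
  have hvarA : ∀ c ∈ A, ⟪(0 : H) - p, c - p⟫ ≤ 0 := by
    have hinf : ‖(0 : H) - PA 0‖ = ⨅ w : A, ‖(0 : H) - w‖ := by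
      have hnonempty : Nonempty A := ⟨⟨PA 0, (hPA 0).1⟩⟩
      exact le_antisymm (le_ciInf fun w => (hPA 0).2 w w.2)
        (ciInf_le (f := fun w : A => ‖(0 : H) - w‖) ⟨0, fun _ ⟨_, h⟩ => h ▸ norm_nonneg _⟩ ⟨PA 0, (hPA 0).1⟩)
    exact (norm_eq_iInf_iff_real_inner_le_zero hAv (hPA 0).1).mp hinf
  have hvarB : ∀ c ∈ B, ⟪(0 : H) - p, c - p⟫ ≤ 0 := by
    have hinf : ‖(0 : H) - PB 0‖ = ⨅ w : B, ‖(0 : H) - w‖ := by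
      have hnonempty : Nonempty B := ⟨⟨PB 0, (hPB 0).1⟩⟩
      exact le_antisymm (le_ciInf fun w => (hPB 0).2 w w.2)
        (ciInf_le (f := fun w : B => ‖(0 : H) - w‖) ⟨0, fun _ ⟨_, h⟩ => h ▸ norm_nonneg _⟩ ⟨PB 0, (hPB 0).1⟩)
    rw [heq]
    exact (norm_eq_iInf_iff_real_inner_le_zero hBv (hPB 0).1).mp hinf
  have hpB : p ∈ B := heq ▸ (hPB 0).1
  -- for any s ≤ 1, the projection of s • p onto A (resp. B) is p
  have projA : ∀ s : ℝ, s ≤ 1 → PA (s • p) = p := by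
    intro s hs
    apply proj_eq_of_inner hAv PA hPA (hPA 0).1
    intro c hc
    rw [show s • p - p = (1 - s) • ((0 : H) - p) from by module, real_inner_smul_left]
    exact mul_nonpos_of_nonneg_of_nonpos (by linarith) (hvarA c hc)
  have projB : ∀ s : ℝ, s ≤ 1 → PB (s • p) = p := by
    intro s hs
    apply proj_eq_of_inner hBv PB hPB hpB
    intro c hc
    rw [show s • p - p = (1 - s) • ((0 : H) - p) from by module, real_inner_smul_left]
    exact mul_nonpos_of_nonneg_of_nonpos (by linarith) (hvarB c hc)
  set s := 1 - 2 * lam * (1 - β) with hs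
  obtain ⟨hlam0, hlam1⟩ := hlam
  obtain ⟨hβ0, hβ1⟩ := hβ
  have hs1 : s ≤ 1 := by nlinarith
  have hPAs : PA (s • p) = p := projA s hs1
  have hs2 : 2 * β - s ≤ 1 := by nlinarith
  have hPBs : PB ((2 * β) • PA (s • p) - s • p) = p := by
    rw [hPAs, show (2 * β) • p - s • p = (2 * β - s) • p from by module]
    exact projB _ hs2
  rw [hPAs] at hPBs
  rw [hT, hPAs, hPBs]
  module
end

section
/- Let H be a real Hilbert space, let A, B ⊆ H be nonempty closed convex sets, and let α, β ∈ (0, 1). Then for every q ∈ H, the range of I − T_{A,B,α,β} equals the range of I − T_{A+q, B+(2β−1)q, α, β} translated by the vector 4αβ(β−1)q; that is, ran(I − T_{A,B,α,β}) = ran(I − T_{A+q,B+(2β−1)q,α,β}) + 4αβ(β−1)q. -/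
open RealInnerProductSpace Pointwise

lemma proj_unique {H : Type*} [NormedAddCommGroup H] [InnerProductSpace ℝ H]
    {C : Set H} (hC : Convex ℝ C) {x p₁ p₂ : H} (hp₁ : p₁ ∈ C) (hp₂ : p₂ ∈ C)
    (h₁ : ∀ c ∈ C, ‖x - p₁‖ ≤ ‖x - c‖) (h₂ : ∀ c ∈ C, ‖x - p₂‖ ≤ ‖x - c‖) :
    p₁ = p₂ := by
  have hd : ‖x - p₁‖ = ‖x - p₂‖ := le_antisymm (h₁ _ hp₂) (h₂ _ hp₁)
  have hmC : (1/2 : ℝ) • p₁ + (1/2 : ℝ) • p₂ ∈ C :=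
    hC hp₁ hp₂ (by norm_num) (by norm_num) (by norm_num)
  have hpar := parallelogram_law_with_norm ℝ (x - p₁) (x - p₂)
  have hsum : (x - p₁) + (x - p₂) = (2 : ℝ) • (x - ((1/2 : ℝ) • p₁ + (1/2 : ℝ) • p₂)) := by
    module
  have hdiff : (x - p₁) - (x - p₂) = p₂ - p₁ := by abel
  rw [hsum, hdiff, norm_smul] at hpar
  have hle : ‖x - p₁‖ ≤ ‖x - ((1/2 : ℝ) • p₁ + (1/2 : ℝ) • p₂)‖ := h₁ _ hmC
  have h2 : ‖(2 : ℝ)‖ = 2 := by norm_num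
  have : ‖p₂ - p₁‖ = 0 := by
    rw [hd] at hpar hle
    rw [h2] at hpar
    nlinarith [norm_nonneg (p₂ - p₁), norm_nonneg (x - p₂),
      norm_nonneg (x - ((1/2 : ℝ) • p₁ + (1/2 : ℝ) • p₂)),
      mul_le_mul hle hle (norm_nonneg _) (norm_nonneg _)]
  have := sub_eq_zero.mp (norm_eq_zero.mp this)
  exact this.symm

/-- Projection onto a translate. -/
lemma proj_translate {H : Type*} [NormedAddCommGroup H] [InnerProductSpace ℝ H]
    {C : Set H} (hC : Convex ℝ C) (v : H) (PC PC' : H → H)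
    (hPC : ∀ x, PC x ∈ C ∧ ∀ c ∈ C, ‖x - PC x‖ ≤ ‖x - c‖)
    (hPC' : ∀ x, PC' x ∈ C + {v} ∧ ∀ c ∈ C + {v}, ‖x - PC' x‖ ≤ ‖x - c‖) :
    ∀ x, PC' x = PC (x - v) + v := by
  intro x
  have hCv : Convex ℝ (C + {v}) := hC.add (convex_singleton v)
  refine proj_unique hCv (hPC' x).1 ?_ (hPC' x).2 ?_
  · exact Set.add_mem_add (hPC (x - v)).1 rfl
  · rintro c hc
    rw [Set.add_singleton] at hc
    obtain ⟨c₀, hc₀, rfl⟩ := hc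
    have h1 : x - (PC (x - v) + v) = (x - v) - PC (x - v) := by abel
    have h2 : x - (c₀ + v) = (x - v) - c₀ := by abel
    rw [h1, h2]
    exact (hPC (x - v)).2 c₀ hc₀

/-- For every `q ∈ H`,
`ran(I − T_{A,B,α,β}) = ran(I − T_{A+q, B+(2β−1)q, α, β}) + 4αβ(β−1)q`. -/
theorem stmt_10 {H : Type*} [NormedAddCommGroup H] [InnerProductSpace ℝ H] [CompleteSpace H]
    (A B : Set H) (hAne : A.Nonempty) (hAc : IsClosed A) (hAv : Convex ℝ A)
    (hBne : B.Nonempty) (hBc : IsClosed B) (hBv : Convex ℝ B)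
    (α β : ℝ) (hα : α ∈ Set.Ioo (0 : ℝ) 1) (hβ : β ∈ Set.Ioo (0 : ℝ) 1)
    (q : H)
    (PA PB PA' PB' : H → H)
    (hPA : ∀ x, PA x ∈ A ∧ ∀ c ∈ A, ‖x - PA x‖ ≤ ‖x - c‖)
    (hPB : ∀ x, PB x ∈ B ∧ ∀ c ∈ B, ‖x - PB x‖ ≤ ‖x - c‖)
    (hPA' : ∀ x, PA' x ∈ A + {q} ∧ ∀ c ∈ A + {q}, ‖x - PA' x‖ ≤ ‖x - c‖)
    (hPB' : ∀ x, PB' x ∈ B + {(2 * β - 1) • q} ∧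
      ∀ c ∈ B + {(2 * β - 1) • q}, ‖x - PB' x‖ ≤ ‖x - c‖)
    (T T' : H → H)
    (hT : ∀ x, T x =
      (1 - α) • x + α • ((2 * β) • PB ((2 * β) • PA x - x) - ((2 * β) • PA x - x)))
    (hT' : ∀ x, T' x =
      (1 - α) • x + α • ((2 * β) • PB' ((2 * β) • PA' x - x) - ((2 * β) • PA' x - x))) :
    Set.range (fun x => x - T x) =
      Set.range (fun x => x - T' x) + {(4 * α * β * (β - 1)) • q} := by
  have hPAeq := proj_translate hAv q PA PA' hPA hPA'
  have hPBeq := proj_translate hBv ((2 * β - 1) • q) PB PB' hPB hPB'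
  have key : ∀ y : H, y - T y = ((y + q) - T' (y + q)) + (4 * α * β * (β - 1)) • q := by
    intro y
    rw [hT, hT', hPAeq, hPBeq]
    have h1 : y + q - q = y := by abel
    rw [h1]
    have h2 : (2 * β) • (PA y + q) - (y + q) - (2 * β - 1) • q = (2 * β) • PA y - y := by
      module
    rw [h2]
    module
  ext z
  simp only [Set.add_singleton, Set.mem_image, Set.mem_range]
  constructor
  · rintro ⟨y, rfl⟩
    exact ⟨(y + q) - T' (y + q), ⟨y + q, rfl⟩, (key y).symm⟩
  · rintro ⟨_, ⟨x, rfl⟩, rfl⟩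
    refine ⟨x - q, ?_⟩
    have := key (x - q)
    rw [sub_add_cancel] at this
    exact this
end

section
/- Let H be a real Hilbert space and let A, B ⊆ H be closed affine subspaces with A ∩ B ≠ ∅. Let y ∈ A ∩ B and let α, β ∈ (0, 1). Then for every x ∈ H, T_{A,B,α,β}(x) = T_{A−y,B−y,α,β}(x) + T_{A,B,α,β}(0). -/
open RealInnerProductSpace Pointwise

private lemma proj_unique_s12 {H : Type*} [NormedAddCommGroup H] [InnerProductSpace ℝ H]
    (K : Submodule ℝ H) [Submodule.HasOrthogonalProjection K] {x p : H} (hp : p ∈ K)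
    (hmin : ∀ c ∈ K, ‖x - p‖ ≤ ‖x - c‖) : p = (Submodule.orthogonalProjectionOnto K x : H) := by
  refine (Submodule.eq_starProjection_of_mem_of_inner_eq_zero hp ?_).symm
  refine (Submodule.norm_eq_iInf_iff_real_inner_eq_zero K hp).mp ?_
  apply le_antisymm
  · exact le_ciInf fun w => hmin w w.2
  · refine ciInf_le ⟨0, ?_⟩ (⟨p, hp⟩ : (K : Set H))
    rintro r ⟨w, rfl⟩
    exact norm_nonneg _

private lemma affine_sub_eq {H : Type*} [NormedAddCommGroup H] [InnerProductSpace ℝ H]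
    (A : Set H) (M : Submodule ℝ H) (a : H) (hA : A = {a} + (M : Set H))
    (y : H) (hy : y ∈ A) : A - {y} = (M : Set H) := by
  rw [hA] at hy ⊢
  obtain ⟨-, ⟨rfl : _ = a⟩, m, hm, rfl⟩ := hy
  ext z
  constructor
  · rintro ⟨p, ⟨-, ⟨rfl : _ = a⟩, m', hm', rfl⟩, q, ⟨rfl : q = _⟩, rfl⟩
    show a + m' - (a + m) ∈ (M : Set H)
    have e : a + m' - (a + m) = m' - m := by abel
    rw [e]
    exact M.sub_mem hm' hm
  · intro hz
    refine ⟨a + (z + m), ⟨a, rfl, z + m, M.add_mem hz hm, rfl⟩, a + m, rfl, ?_⟩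
    show a + (z + m) - (a + m) = z
    abel

/-- For closed affine subspaces `A, B` with `y ∈ A ∩ B` and
`α, β ∈ (0,1)`, one has `T_{A,B,α,β}(x) = T_{A−y,B−y,α,β}(x) + T_{A,B,α,β}(0)` for all `x`. -/
theorem stmt_12 {H : Type*} [NormedAddCommGroup H] [InnerProductSpace ℝ H] [CompleteSpace H]
    (A B : Set H)
    (MA MB : Submodule ℝ H) (hMA : IsClosed (MA : Set H)) (hMB : IsClosed (MB : Set H))
    (a b : H) (hA : A = {a} + (MA : Set H)) (hB : B = {b} + (MB : Set H))
    (y : H) (hy : y ∈ A ∩ B)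
    (α β : ℝ) (hα : α ∈ Set.Ioo (0 : ℝ) 1) (hβ : β ∈ Set.Ioo (0 : ℝ) 1)
    (PA PB PAy PBy : H → H)
    (hPA : ∀ x, PA x ∈ A ∧ ∀ c ∈ A, ‖x - PA x‖ ≤ ‖x - c‖)
    (hPB : ∀ x, PB x ∈ B ∧ ∀ c ∈ B, ‖x - PB x‖ ≤ ‖x - c‖)
    (hPAy : ∀ x, PAy x ∈ A - {y} ∧ ∀ c ∈ A - {y}, ‖x - PAy x‖ ≤ ‖x - c‖)
    (hPBy : ∀ x, PBy x ∈ B - {y} ∧ ∀ c ∈ B - {y}, ‖x - PBy x‖ ≤ ‖x - c‖)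
    (T Ty : H → H)
    (hT : ∀ x, T x =
      (1 - α) • x + α • ((2 * β) • PB ((2 * β) • PA x - x) - ((2 * β) • PA x - x)))
    (hTy : ∀ x, Ty x =
      (1 - α) • x + α • ((2 * β) • PBy ((2 * β) • PAy x - x) - ((2 * β) • PAy x - x))) :
    ∀ x, T x = Ty x + T 0 := by
  haveI : CompleteSpace MA := hMA.completeSpace_coe
  haveI : CompleteSpace MB := hMB.completeSpace_coe
  have hAy : A - {y} = (MA : Set H) := affine_sub_eq A MA a hA y hy.1
  have hBy : B - {y} = (MB : Set H) := affine_sub_eq B MB b hB y hy.2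
  set f : H →L[ℝ] H := MA.subtypeL.comp (Submodule.orthogonalProjectionOnto MA) with hf
  set g : H →L[ℝ] H := MB.subtypeL.comp (Submodule.orthogonalProjectionOnto MB) with hg
  -- characterizations
  have hPAy' : ∀ x, PAy x = f x := by
    intro x
    have h1 := (hPAy x).1
    have h2 := (hPAy x).2
    rw [hAy] at h1 h2
    exact proj_unique_s12 MA h1 h2
  have hPBy' : ∀ x, PBy x = g x := by
    intro x
    have h1 := (hPBy x).1
    have h2 := (hPBy x).2
    rw [hBy] at h1 h2
    exact proj_unique_s12 MB h1 h2
  have memA : ∀ c, c ∈ MA → c + y ∈ A := by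
    intro c hc
    have : c ∈ A - {y} := by rw [hAy]; exact hc
    obtain ⟨p, hp, q, ⟨rfl : q = y⟩, rfl⟩ := this
    simpa using hp
  have memB : ∀ c, c ∈ MB → c + y ∈ B := by
    intro c hc
    have : c ∈ B - {y} := by rw [hBy]; exact hc
    obtain ⟨p, hp, q, ⟨rfl : q = y⟩, rfl⟩ := this
    simpa using hp
  have hPA' : ∀ x, PA x = f (x - y) + y := by
    intro x
    have h1 : PA x - y ∈ MA := by
      have : PA x - y ∈ A - {y} := ⟨PA x, (hPA x).1, y, rfl, rfl⟩
      rwa [hAy] at this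
    have h2 : ∀ c ∈ MA, ‖(x - y) - (PA x - y)‖ ≤ ‖(x - y) - c‖ := by
      intro c hc
      have := (hPA x).2 (c + y) (memA c hc)
      have e1 : (x - y) - (PA x - y) = x - PA x := by abel
      have e2 : (x - y) - c = x - (c + y) := by abel
      rw [e1, e2]; exact this
    have := proj_unique_s12 MA h1 h2
    have hfx : f (x - y) = ((Submodule.orthogonalProjectionOnto MA) (x - y) : H) := rfl
    rw [hfx, ← this]; abel
  have hPB' : ∀ x, PB x = g (x - y) + y := by
    intro x
    have h1 : PB x - y ∈ MB := by
      have : PB x - y ∈ B - {y} := ⟨PB x, (hPB x).1, y, rfl, rfl⟩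
      rwa [hBy] at this
    have h2 : ∀ c ∈ MB, ‖(x - y) - (PB x - y)‖ ≤ ‖(x - y) - c‖ := by
      intro c hc
      have := (hPB x).2 (c + y) (memB c hc)
      have e1 : (x - y) - (PB x - y) = x - PB x := by abel
      have e2 : (x - y) - c = x - (c + y) := by abel
      rw [e1, e2]; exact this
    have := proj_unique_s12 MB h1 h2
    have hgx : g (x - y) = ((Submodule.orthogonalProjectionOnto MB) (x - y) : H) := rfl
    rw [hgx, ← this]; abel
  intro x
  simp only [hT, hTy, hPA', hPB', hPAy', hPBy']
  simp only [zero_sub, sub_zero, map_sub, map_add, map_smul, map_neg, smul_neg, smul_add,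
    smul_sub, smul_zero, map_zero]
  module
end

section
/- Let H be a real Hilbert space and let A, B ⊆ H be closed affine subspaces with A ∩ B ≠ ∅. Let y ∈ A ∩ B, let α, β ∈ (0, 1), and let z* be any fixed point of T_{A,B,α,β}. Then for every x ∈ H, T_{A,B,α,β}(x) = T_{A−y,B−y,α,β}(x − z*) + z*, and moreover Fix T_{A,B,α,β} = z* + Fix T_{A−y,B−y,α,β}. -/
open RealInnerProductSpace Pointwise

theorem proj_char' {H : Type*} [NormedAddCommGroup H] [InnerProductSpace ℝ H]
    (M : Submodule ℝ H) [CompleteSpace M] (u v : H) (hv : v ∈ M)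
    (hmin : ∀ m ∈ M, ‖u - v‖ ≤ ‖u - m‖) :
    v = (M.orthogonalProjection u : H) := by
  have h1 : ‖u - v‖ = ⨅ w : (M : Set H), ‖u - w‖ := by
    apply le_antisymm
    · exact le_ciInf fun w => hmin w w.2
    · exact ciInf_le ⟨0, by rintro r ⟨w, rfl⟩; positivity⟩ (⟨v, hv⟩ : (M : Set H))
  exact (Submodule.eq_starProjection_of_mem_of_inner_eq_zero hv
    ((Submodule.norm_eq_iInf_iff_real_inner_eq_zero M hv).1 h1)).symm

theorem coset_eq' {H : Type*} [NormedAddCommGroup H] [InnerProductSpace ℝ H]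
    (M : Submodule ℝ H) (a y : H)
    (hy : y ∈ ({a} : Set H) + (M : Set H)) :
    ({a} : Set H) + (M : Set H) = {y} + (M : Set H) := by
  obtain ⟨m0, hm0, hy0⟩ : ∃ m0 ∈ M, a + m0 = y := by
    rw [Set.singleton_add] at hy
    obtain ⟨m0, hm0, h⟩ := hy
    exact ⟨m0, hm0, h⟩
  ext z
  simp only [Set.singleton_add, Set.mem_image, SetLike.mem_coe]
  constructor
  · rintro ⟨m, hm, rfl⟩
    exact ⟨m - m0, M.sub_mem hm hm0, by rw [← hy0]; abel⟩
  · rintro ⟨m, hm, rfl⟩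
    exact ⟨m0 + m, M.add_mem hm0 hm, by rw [← hy0]; abel⟩

theorem coset_sub' {H : Type*} [AddCommGroup H] (M : Set H) (y : H) :
    ({y} : Set H) + M - {y} = M := by
  rw [Set.sub_singleton, Set.singleton_add]
  ext z
  constructor
  · rintro ⟨-, ⟨m, hm, rfl⟩, rfl⟩
    simpa using hm
  · intro hz
    exact ⟨y + z, ⟨z, hz, rfl⟩, add_sub_cancel_left y z⟩

theorem proj_affine' {H : Type*} [NormedAddCommGroup H] [InnerProductSpace ℝ H]
    (M : Submodule ℝ H) [CompleteSpace M] (y : H) (P : H → H)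
    (hP : ∀ x, P x ∈ ({y} : Set H) + (M : Set H) ∧
      ∀ c ∈ ({y} : Set H) + (M : Set H), ‖x - P x‖ ≤ ‖x - c‖) :
    ∀ x, P x = y + (M.orthogonalProjection (x - y) : H) := by
  intro x
  obtain ⟨hmem, hmin⟩ := hP x
  rw [Set.singleton_add] at hmem
  obtain ⟨m, hm, hmx⟩ := hmem
  have hsub : P x - y ∈ M := by
    rw [← hmx]; simpa using hm
  have key := proj_char' M (x - y) (P x - y) hsub ?_
  · rw [← key]; abel
  · intro m' hm'
    have h := hmin (y + m') (by rw [Set.singleton_add]; exact ⟨m', hm', rfl⟩)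
    have e1 : x - y - (P x - y) = x - P x := by abel
    have e2 : x - y - m' = x - (y + m') := by abel
    rw [e1, e2]; exact h

/-- For closed affine subspaces `A, B` with `y ∈ A ∩ B`, `α, β ∈ (0,1)`,
and `z*` a fixed point of `T_{A,B,α,β}`:
`T_{A,B,α,β}(x) = T_{A−y,B−y,α,β}(x − z*) + z*` for all `x`, and
`Fix T_{A,B,α,β} = z* + Fix T_{A−y,B−y,α,β}`. -/
theorem stmt_13 {H : Type*} [NormedAddCommGroup H] [InnerProductSpace ℝ H] [CompleteSpace H]
    (A B : Set H)
    (MA MB : Submodule ℝ H) (hMA : IsClosed (MA : Set H)) (hMB : IsClosed (MB : Set H))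
    (a b : H) (hA : A = {a} + (MA : Set H)) (hB : B = {b} + (MB : Set H))
    (y : H) (hy : y ∈ A ∩ B)
    (α β : ℝ) (hα : α ∈ Set.Ioo (0 : ℝ) 1) (hβ : β ∈ Set.Ioo (0 : ℝ) 1)
    (PA PB PAy PBy : H → H)
    (hPA : ∀ x, PA x ∈ A ∧ ∀ c ∈ A, ‖x - PA x‖ ≤ ‖x - c‖)
    (hPB : ∀ x, PB x ∈ B ∧ ∀ c ∈ B, ‖x - PB x‖ ≤ ‖x - c‖)
    (hPAy : ∀ x, PAy x ∈ A - {y} ∧ ∀ c ∈ A - {y}, ‖x - PAy x‖ ≤ ‖x - c‖)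
    (hPBy : ∀ x, PBy x ∈ B - {y} ∧ ∀ c ∈ B - {y}, ‖x - PBy x‖ ≤ ‖x - c‖)
    (T Ty : H → H)
    (hT : ∀ x, T x =
      (1 - α) • x + α • ((2 * β) • PB ((2 * β) • PA x - x) - ((2 * β) • PA x - x)))
    (hTy : ∀ x, Ty x =
      (1 - α) • x + α • ((2 * β) • PBy ((2 * β) • PAy x - x) - ((2 * β) • PAy x - x)))
    (zs : H) (hzs : T zs = zs) :
    (∀ x, T x = Ty (x - zs) + zs) ∧
    {x | T x = x} = (fun s => zs + s) '' {x | Ty x = x} := by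
  haveI : CompleteSpace MA := hMA.completeSpace_coe
  haveI : CompleteSpace MB := hMB.completeSpace_coe
  set KA : H →L[ℝ] H := MA.subtypeL.comp MA.orthogonalProjection with hKA
  set KB : H →L[ℝ] H := MB.subtypeL.comp MB.orthogonalProjection with hKB
  have hA' : A = {y} + (MA : Set H) := hA.trans (coset_eq' MA a y (hA ▸ hy.1))
  have hB' : B = {b} + (MB : Set H) := hB
  have hB'' : B = {y} + (MB : Set H) := hB.trans (coset_eq' MB b y (hB ▸ hy.2))
  have hAy : A - {y} = ({(0 : H)} : Set H) + (MA : Set H) := by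
    rw [hA', coset_sub', Set.singleton_add]
    ext z; simp
  have hBy : B - {y} = ({(0 : H)} : Set H) + (MB : Set H) := by
    rw [hB'', coset_sub', Set.singleton_add]
    ext z; simp
  have qA : ∀ x, PA x = y + KA (x - y) :=
    proj_affine' MA y PA (fun x => by rw [← hA']; exact hPA x)
  have qB : ∀ x, PB x = y + KB (x - y) :=
    proj_affine' MB y PB (fun x => by rw [← hB'']; exact hPB x)
  have qAy : ∀ x, PAy x = KA x := by
    intro x
    have := proj_affine' MA 0 PAy (fun x => by rw [← hAy]; exact hPAy x) x
    exact (by simpa using this : PAy x = MA.starProjection x)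
  have qBy : ∀ x, PBy x = KB x := by
    intro x
    have := proj_affine' MB 0 PBy (fun x => by rw [← hBy]; exact hPBy x) x
    exact (by simpa using this : PBy x = MB.starProjection x)
  have key : ∀ u v, T u - T v = Ty (u - v) := by
    intro u v
    rw [hT u, hT v, hTy (u - v)]
    simp only [qA, qB, qAy, qBy, map_sub, map_add, map_smul, smul_sub, smul_add]
    module
  have part1 : ∀ x, T x = Ty (x - zs) + zs := by
    intro x
    have h := key x zs
    rw [hzs] at h
    rw [← h]; abel
  refine ⟨part1, ?_⟩
  ext x
  simp only [Set.mem_setOf_eq, Set.mem_image]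
  constructor
  · intro hx
    refine ⟨x - zs, ?_, by abel⟩
    have h1 := part1 x
    rw [hx] at h1
    exact (sub_eq_iff_eq_add.mpr h1).symm
  · rintro ⟨s, hs, rfl⟩
    have h2 : zs + s - zs = s := by abel
    rw [part1 (zs + s), h2, hs]
    abel
end

section
/- Let H be a real Hilbert space, let A, B ⊆ H be nonempty closed convex sets with A ∩ B ≠ ∅, let α, β ∈ (0, 1), and let q ∈ H satisfy q − P_{A∩B}(q) ∈ N_A(P_{A∩B}(q)) + N_B(P_{A∩B}(q)). Given any x₀ ∈ H, define x_{n+1} = T_{A−q,B−q,α,β}(x_n) for n ≥ 0. Then: (i) the sequence (x_n) converges weakly (i.e., ⟨x_n, y⟩ → ⟨x*, y⟩ for every y ∈ H) to a fixed point x* of T_{A−q,B−q,α,β} satisfying P_A(q + x*) = P_{A∩B}(q); (ii) x_{n+1} − x_n converges strongly (in norm) to 0; and (iii) the shadow sequence (P_A(q + x_n)) converges strongly (in norm) to P_{A∩B}(q). -/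
open RealInnerProductSpace Pointwise Filter

section Aux

variable {H : Type*} [NormedAddCommGroup H] [InnerProductSpace ℝ H]

lemma aamr_var {C : Set H} (hC : Convex ℝ C) {x u : H} (hu : u ∈ C)
    (hmin : ∀ c ∈ C, ‖x - u‖ ≤ ‖x - c‖) : ∀ c ∈ C, ⟪x - u, c - u⟫ ≤ 0 := by
  haveI : Nonempty C := ⟨⟨u, hu⟩⟩
  have h : ‖x - u‖ = ⨅ w : C, ‖x - w‖ := by
    refine le_antisymm (le_ciInf fun w => hmin w w.2) ?_
    have hbdd : BddBelow (Set.range fun w : C => ‖x - (w : H)‖) := by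
      refine ⟨0, ?_⟩
      rintro r ⟨w, rfl⟩
      exact norm_nonneg _
    exact ciInf_le hbdd ⟨u, hu⟩
  exact (norm_eq_iInf_iff_real_inner_le_zero hC hu).1 h

lemma aamr_eq_of_var {C : Set H} {x u v : H} (hu : u ∈ C)
    (huvar : ∀ c ∈ C, ⟪x - u, c - u⟫ ≤ 0) (hv : v ∈ C)
    (hvvar : ∀ c ∈ C, ⟪x - v, c - v⟫ ≤ 0) : u = v := by
  have h1 := huvar v hv
  have h2 := hvvar u hu
  have key : ⟪u - v, u - v⟫ ≤ 0 := by
    have e : u - v = (x - v) - (x - u) := by abel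
    rw [e, inner_sub_left]
    have e2 : ⟪x - u, (x - v) - (x - u)⟫ = -⟪x - u, v - u⟫ := by
      rw [← inner_neg_right]; congr 1; abel
    have e3 : ⟪x - v, (x - v) - (x - u)⟫ = ⟪x - v, u - v⟫ := by congr 1; abel
    rw [e3, e2]
    linarith
  exact sub_eq_zero.1 (real_inner_self_nonpos.1 key)

lemma aamr_proj_eq {C : Set H} (hC : Convex ℝ C) {P : H → H}
    (hP : ∀ y, P y ∈ C ∧ ∀ c ∈ C, ‖y - P y‖ ≤ ‖y - c‖) {x u : H} (hu : u ∈ C)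
    (hvar : ∀ c ∈ C, ⟪x - u, c - u⟫ ≤ 0) : P x = u :=
  aamr_eq_of_var (hP x).1 (aamr_var hC (hP x).1 (hP x).2) hu hvar

lemma aamr_firm {C : Set H} (hC : Convex ℝ C) {P : H → H}
    (hP : ∀ y, P y ∈ C ∧ ∀ c ∈ C, ‖y - P y‖ ≤ ‖y - c‖) (x y : H) :
    ‖P x - P y‖ ^ 2 ≤ ⟪x - y, P x - P y⟫ := by
  have h1 : ⟪x - P x, P y - P x⟫ ≤ 0 := aamr_var hC (hP x).1 (hP x).2 _ (hP y).1
  have h2 : ⟪y - P y, P x - P y⟫ ≤ 0 := aamr_var hC (hP y).1 (hP y).2 _ (hP x).1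
  have hsplit : x - y = (x - P x) + (P x - P y) + (P y - y) := by abel
  rw [hsplit, inner_add_left, inner_add_left]
  have e1 : ⟪x - P x, P x - P y⟫ = -⟪x - P x, P y - P x⟫ := by
    rw [← inner_neg_right]; congr 1; abel
  have e2 : ⟪P y - y, P x - P y⟫ = -⟪y - P y, P x - P y⟫ := by
    rw [← inner_neg_left]; congr 1; abel
  have e3 : ⟪P x - P y, P x - P y⟫ = ‖P x - P y‖ ^ 2 := real_inner_self_eq_norm_sq _
  rw [e1, e2, e3]
  linarith

lemma aamr_reflect {C : Set H} (hC : Convex ℝ C) {P : H → H}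
    (hP : ∀ y, P y ∈ C ∧ ∀ c ∈ C, ‖y - P y‖ ≤ ‖y - c‖) {β : ℝ} (hβ0 : 0 < β)
    (x y : H) :
    ‖((2 * β) • P x - x) - ((2 * β) • P y - y)‖ ^ 2
      ≤ ‖x - y‖ ^ 2 - 4 * β * (1 - β) * ‖P x - P y‖ ^ 2 := by
  have hfirm := aamr_firm hC hP x y
  have hexp : ((2 * β) • P x - x) - ((2 * β) • P y - y)
      = (2 * β) • (P x - P y) - (x - y) := by rw [smul_sub]; abel
  rw [hexp, norm_sub_sq_real, norm_smul, real_inner_smul_left]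
  have : ‖(2 * β : ℝ)‖ = 2 * β := by
    rw [Real.norm_eq_abs, abs_of_pos (by linarith)]
  rw [this]
  nlinarith [hfirm, real_inner_comm (x - y) (P x - P y), sq_nonneg (‖P x - P y‖)]

lemma avg_norm_sq (α : ℝ) (a b : H) :
    ‖(1 - α) • a + α • b‖ ^ 2
      = (1 - α) * ‖a‖ ^ 2 + α * ‖b‖ ^ 2 - α * (1 - α) * ‖a - b‖ ^ 2 := by
  have h1 : ‖(1 - α) • a + α • b‖ ^ 2
      = ((1 - α) * ‖a‖) ^ 2 + 2 * ((1 - α) * (α * ⟪a, b⟫)) + (α * ‖b‖) ^ 2 := by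
    rw [norm_add_sq_real, norm_smul, norm_smul, real_inner_smul_left, real_inner_smul_right,
      Real.norm_eq_abs, Real.norm_eq_abs]
    ring_nf
    rw [sq_abs, sq_abs]
    ring
  have h2 : ‖a - b‖ ^ 2 = ‖a‖ ^ 2 - 2 * ⟪a, b⟫ + ‖b‖ ^ 2 := norm_sub_sq_real a b
  linear_combination h1 + (α * (1 - α)) * h2

lemma aamr_weak_cluster [CompleteSpace H] (u : ℕ → H) (M : ℝ) (hb : ∀ n, ‖u n‖ ≤ M) :
    ∃ φ : ℕ → ℕ, StrictMono φ ∧ ∃ z : H,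
      ∀ y, Tendsto (fun k => ⟪u (φ k), y⟫) atTop (nhds ⟪z, y⟫) := by
  have hM0 : 0 ≤ M := le_trans (norm_nonneg _) (hb 0)
  set F : ℕ → ℕ → ℝ := fun n m => ⟪u n, u m⟫ with hF
  have hFmem : ∀ n, F n ∈ Set.pi Set.univ (fun _ : ℕ => Set.Icc (-(M * M)) (M * M)) := by
    intro n m _
    have h := abs_real_inner_le_norm (u n) (u m)
    have h2 : ‖u n‖ * ‖u m‖ ≤ M * M :=
      mul_le_mul (hb n) (hb m) (norm_nonneg _) hM0
    have := abs_le.1 (h.trans h2)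
    exact ⟨this.1, this.2⟩
  have hcomp : IsCompact (Set.pi Set.univ fun _ : ℕ => Set.Icc (-(M * M)) (M * M)) :=
    isCompact_univ_pi fun _ => isCompact_Icc
  obtain ⟨g, -, φ, hφ, hconv⟩ := hcomp.isSeqCompact hFmem
  have hpt : ∀ m, Tendsto (fun k => ⟪u (φ k), u m⟫) atTop (nhds (g m)) := fun m =>
    (tendsto_pi_nhds.1 hconv) m
  refine ⟨φ, hφ, ?_⟩
  set S : Submodule ℝ H := (Submodule.span ℝ (Set.range u)).topologicalClosure with hS
  have hSclosed : IsClosed (S : Set H) := Submodule.isClosed_topologicalClosure _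
  haveI : CompleteSpace S := hSclosed.completeSpace_coe
  have huS : ∀ n, u n ∈ S :=
    fun n => (Submodule.le_topologicalClosure _) (Submodule.subset_span ⟨n, rfl⟩)
  have hspan : ∀ w ∈ Submodule.span ℝ (Set.range u),
      ∃ r, Tendsto (fun k => ⟪u (φ k), w⟫) atTop (nhds r) := by
    intro w hw
    induction hw using Submodule.span_induction with
    | mem w hw =>
      obtain ⟨m, rfl⟩ := hw
      exact ⟨g m, hpt m⟩
    | zero => exact ⟨0, by simp⟩
    | add w1 w2 _ _ h1 h2 =>
      obtain ⟨r1, h1⟩ := h1; obtain ⟨r2, h2⟩ := h2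
      exact ⟨r1 + r2, by simpa [inner_add_right] using h1.add h2⟩
    | smul c w _ h =>
      obtain ⟨r, h⟩ := h
      exact ⟨c * r, by simpa [real_inner_smul_right] using h.const_mul c⟩
  have hconvS : ∀ y ∈ (S : Set H), ∃ r, Tendsto (fun k => ⟪u (φ k), y⟫) atTop (nhds r) := by
    intro y hy
    have hcauchy : CauchySeq fun k => ⟪u (φ k), y⟫ := by
      rw [Metric.cauchySeq_iff]
      intro ε hε
      have hδ : 0 < ε / (4 * (M + 1)) := by positivity
      have hy' : y ∈ closure ((Submodule.span ℝ (Set.range u) : Submodule ℝ H) : Set H) := hy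
      obtain ⟨w, hwmem, hwd⟩ := Metric.mem_closure_iff.1 hy' _ hδ
      obtain ⟨r, hr⟩ := hspan w hwmem
      obtain ⟨N, hN⟩ := Metric.cauchySeq_iff.1 hr.cauchySeq (ε / 2) (by positivity)
      refine ⟨N, fun m hm n hn => ?_⟩
      have hclose : ∀ k, |⟪u (φ k), y⟫ - ⟪u (φ k), w⟫| ≤ M * (ε / (4 * (M + 1))) := by
        intro k
        have : ⟪u (φ k), y⟫ - ⟪u (φ k), w⟫ = ⟪u (φ k), y - w⟫ := by
          rw [inner_sub_right]
        rw [this]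
        refine (abs_real_inner_le_norm _ _).trans ?_
        have h1 : ‖y - w‖ ≤ ε / (4 * (M + 1)) := by
          rw [← dist_eq_norm]; exact le_of_lt hwd
        exact mul_le_mul (hb _) h1 (norm_nonneg _) hM0
      have hMd : M * (ε / (4 * (M + 1))) < ε / 4 := by
        have h2 : (M + 1) * (ε / (4 * (M + 1))) = ε / 4 := by
          have hM1 : (M : ℝ) + 1 ≠ 0 := by linarith
          field_simp
        have h3 : M * (ε / (4 * (M + 1))) < (M + 1) * (ε / (4 * (M + 1))) :=
          mul_lt_mul_of_pos_right (by linarith) hδ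
        rwa [h2] at h3
      have hw' := hN m hm n hn
      rw [Real.dist_eq] at hw' ⊢
      have t1 := hclose m
      have t2 := hclose n
      calc |⟪u (φ m), y⟫ - ⟪u (φ n), y⟫|
          ≤ |⟪u (φ m), w⟫ - ⟪u (φ n), w⟫|
            + |⟪u (φ m), y⟫ - ⟪u (φ m), w⟫| + |⟪u (φ n), y⟫ - ⟪u (φ n), w⟫| := by
            have habs : ⟪u (φ m), y⟫ - ⟪u (φ n), y⟫
                = (⟪u (φ m), w⟫ - ⟪u (φ n), w⟫) + (⟪u (φ m), y⟫ - ⟪u (φ m), w⟫)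
                  - (⟪u (φ n), y⟫ - ⟪u (φ n), w⟫) := by ring
            rw [habs]
            exact (abs_sub _ _).trans (by gcongr; exact abs_add_le _ _)
      _ < ε / 2 + ε / 4 + ε / 4 := by
            apply add_lt_add_of_lt_of_le (add_lt_add_of_lt_of_le hw' (t1.trans hMd.le))
            exact t2.trans hMd.le
      _ = ε := by ring
    exact cauchySeq_tendsto_of_complete hcauchy
  have hAll : ∀ y : H, ∃ r, Tendsto (fun k => ⟪u (φ k), y⟫) atTop (nhds r) := by
    intro y
    obtain ⟨r, hr⟩ := hconvS ((S.orthogonalProjectionOnto y : H)) (S.orthogonalProjectionOnto y).2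
    refine ⟨r, ?_⟩
    have heq : ∀ k, ⟪u (φ k), y⟫ = ⟪u (φ k), (S.orthogonalProjectionOnto y : H)⟫ := by
      intro k
      have horth : y - S.orthogonalProjectionOnto y ∈ Sᗮ :=
        Submodule.sub_starProjection_mem_orthogonal (K := S) y
      have h0 : ⟪u (φ k), y - (S.orthogonalProjectionOnto y : H)⟫ = 0 :=
        (Submodule.mem_orthogonal S _).1 horth _ (huS _)
      have := inner_sub_right (𝕜 := ℝ) (u (φ k)) y ((S.orthogonalProjectionOnto y : H))
      rw [h0] at this
      linarith
    simpa only [heq] using hr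
  choose L hL using hAll
  have hLadd : ∀ y1 y2, L (y1 + y2) = L y1 + L y2 := by
    intro y1 y2
    refine tendsto_nhds_unique (hL (y1 + y2)) ?_
    simpa [inner_add_right] using (hL y1).add (hL y2)
  have hLsmul : ∀ (c : ℝ) y, L (c • y) = c * L y := by
    intro c y
    refine tendsto_nhds_unique (hL (c • y)) ?_
    simpa [real_inner_smul_right] using (hL y).const_mul c
  have hLbound : ∀ y, |L y| ≤ M * ‖y‖ := by
    intro y
    have h1 : Tendsto (fun k => |⟪u (φ k), y⟫|) atTop (nhds |L y|) := (hL y).abs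
    refine le_of_tendsto h1 (Eventually.of_forall fun k => ?_)
    exact (abs_real_inner_le_norm _ _).trans
      (mul_le_mul_of_nonneg_right (hb _) (norm_nonneg _))
  let Llin : H →ₗ[ℝ] ℝ :=
    { toFun := L
      map_add' := hLadd
      map_smul' := hLsmul }
  let Lcont : H →L[ℝ] ℝ := Llin.mkContinuous M fun y => by
    simpa [Llin, Real.norm_eq_abs] using hLbound y
  refine ⟨(InnerProductSpace.toDual ℝ H).symm Lcont, fun y => ?_⟩
  have : ⟪(InnerProductSpace.toDual ℝ H).symm Lcont, y⟫ = Lcont y :=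
    InnerProductSpace.toDual_symm_apply
  rw [this]
  exact hL y

lemma aamr_demiclosed {T : H → H} (hTnon : ∀ a b, ‖T a - T b‖ ≤ ‖a - b‖)
    (u : ℕ → H) (z : H) (M : ℝ) (hb : ∀ k, ‖u k‖ ≤ M)
    (hweak : ∀ y, Tendsto (fun k => ⟪u k, y⟫) atTop (nhds ⟪z, y⟫))
    (hreg : Tendsto (fun k => ‖T (u k) - u k‖) atTop (nhds 0)) : T z = z := by
  set ε : ℕ → ℝ := fun k => ‖T (u k) - u k‖ with hε
  have hεnn : ∀ k, 0 ≤ ε k := fun k => norm_nonneg _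
  have hid : ∀ k, ‖u k - z‖ ^ 2 - ‖u k - T z‖ ^ 2
      = 2 * ⟪u k, T z - z⟫ + ‖z‖ ^ 2 - ‖T z‖ ^ 2 := by
    intro k
    rw [norm_sub_sq_real, norm_sub_sq_real, inner_sub_right]
    ring
  have hest : ∀ k, -(ε k * (2 * (M + ‖z‖) + ε k)) ≤ ‖u k - z‖ ^ 2 - ‖u k - T z‖ ^ 2 := by
    intro k
    have h1 : ‖u k - T z‖ ≤ ε k + ‖u k - z‖ := by
      have t1 : ‖u k - T z‖ ≤ ‖u k - T (u k)‖ + ‖T (u k) - T z‖ :=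
        norm_sub_le_norm_sub_add_norm_sub _ _ _
      have t2 : ‖u k - T (u k)‖ = ε k := by rw [hε]; exact norm_sub_rev _ _
      have t3 : ‖T (u k) - T z‖ ≤ ‖u k - z‖ := hTnon _ _
      linarith
    have h2 : ‖u k - z‖ ≤ M + ‖z‖ := (norm_sub_le _ _).trans (by gcongr; exact hb k)
    have h1sq : ‖u k - T z‖ ^ 2 ≤ (ε k + ‖u k - z‖) ^ 2 :=
      pow_le_pow_left₀ (norm_nonneg _) h1 2
    nlinarith [hεnn k, norm_nonneg (u k - z)]
  have hs : Tendsto (fun k => 2 * ⟪u k, T z - z⟫ + ‖z‖ ^ 2 - ‖T z‖ ^ 2) atTop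
      (nhds (2 * ⟪z, T z - z⟫ + ‖z‖ ^ 2 - ‖T z‖ ^ 2)) :=
    (((hweak (T z - z)).const_mul 2).add_const (‖z‖ ^ 2)).sub_const (‖T z‖ ^ 2)
  have ht : Tendsto (fun k => -(ε k * (2 * (M + ‖z‖) + ε k))) atTop (nhds 0) := by
    have h0 : Tendsto (fun k => 2 * (M + ‖z‖) + ε k) atTop (nhds (2 * (M + ‖z‖) + 0)) :=
      tendsto_const_nhds.add hreg
    have := (hreg.mul h0).neg
    simpa using this
  have hge : (0 : ℝ) ≤ 2 * ⟪z, T z - z⟫ + ‖z‖ ^ 2 - ‖T z‖ ^ 2 :=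
    le_of_tendsto_of_tendsto' ht hs fun k => (hest k).trans_eq (hid k)
  have e1 : ⟪z, T z - z⟫ = ⟪z, T z⟫ - ⟪z, z⟫ := inner_sub_right _ _ _
  have e3 : ⟪z, z⟫ = ‖z‖ ^ 2 := real_inner_self_eq_norm_sq z
  have e4 : ⟪z, T z⟫ = ⟪T z, z⟫ := real_inner_comm _ _
  have e2 : ‖T z - z‖ ^ 2 = ‖T z‖ ^ 2 - 2 * ⟪T z, z⟫ + ‖z‖ ^ 2 := norm_sub_sq_real _ _
  have hkey : ‖T z - z‖ ^ 2 ≤ 0 := by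
    rw [e1, e3, e4] at hge
    linarith
  have : ‖T z - z‖ = 0 := by nlinarith [norm_nonneg (T z - z)]
  exact sub_eq_zero.1 (norm_eq_zero.1 this)

end Aux

/-- Under the constraint qualification
`q − P_{A∩B}(q) ∈ N_A(P_{A∩B}(q)) + N_B(P_{A∩B}(q))`, the AAMR iteration
`x_{n+1} = T_{A−q,B−q,α,β}(x_n)` converges weakly to a fixed point `x*` with
`P_A(q + x*) = P_{A∩B}(q)`, the differences `x_{n+1} − x_n` converge strongly to `0`,
and the shadow sequence `P_A(q + x_n)` converges strongly to `P_{A∩B}(q)`. -/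
theorem stmt_14 {H : Type*} [NormedAddCommGroup H] [InnerProductSpace ℝ H] [CompleteSpace H]
    (A B : Set H) (hAne : A.Nonempty) (hAc : IsClosed A) (hAv : Convex ℝ A)
    (hBne : B.Nonempty) (hBc : IsClosed B) (hBv : Convex ℝ B)
    (hAB : (A ∩ B).Nonempty)
    (α β : ℝ) (hα : α ∈ Set.Ioo (0 : ℝ) 1) (hβ : β ∈ Set.Ioo (0 : ℝ) 1)
    (q : H)
    (PA PAq PBq : H → H)
    (hPA : ∀ x, PA x ∈ A ∧ ∀ c ∈ A, ‖x - PA x‖ ≤ ‖x - c‖)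
    (hPAq : ∀ x, PAq x ∈ A - {q} ∧ ∀ c ∈ A - {q}, ‖x - PAq x‖ ≤ ‖x - c‖)
    (hPBq : ∀ x, PBq x ∈ B - {q} ∧ ∀ c ∈ B - {q}, ‖x - PBq x‖ ≤ ‖x - c‖)
    (p : H) (hp : p ∈ A ∩ B ∧ ∀ y ∈ A ∩ B, ‖q - p‖ ≤ ‖q - y‖)
    (hCQ : q - p ∈ normalCone A p + normalCone B p)
    (T : H → H)
    (hT : ∀ x, T x =
      (1 - α) • x + α • ((2 * β) • PBq ((2 * β) • PAq x - x) - ((2 * β) • PAq x - x)))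
    (x : ℕ → H) (hrec : ∀ n, x (n + 1) = T (x n)) :
    ∃ xs, T xs = xs ∧ PA (q + xs) = p ∧
      (∀ y, Tendsto (fun n => ⟪x n, y⟫) atTop (nhds ⟪xs, y⟫)) ∧
      Tendsto (fun n => x (n + 1) - x n) atTop (nhds 0) ∧
      Tendsto (fun n => PA (q + x n)) atTop (nhds p) := by
  obtain ⟨hα0, hα1⟩ := hα
  obtain ⟨hβ0, hβ1⟩ := hβ
  -- membership in translated sets
  have hmem : ∀ (C : Set H) (c : H), c ∈ C - {q} ↔ c + q ∈ C := by
    intro C c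
    constructor
    · rintro ⟨a, ha, b, hb, rfl⟩
      rcases Set.mem_singleton_iff.1 hb with rfl
      simpa using ha
    · intro h
      exact ⟨c + q, h, q, rfl, add_sub_cancel_right c q⟩
  -- convexity of translated sets
  have hAqv : Convex ℝ (A - {q}) := hAv.sub (convex_singleton q)
  have hBqv : Convex ℝ (B - {q}) := hBv.sub (convex_singleton q)
  have hABqv : Convex ℝ ((A ∩ B) - {q}) := (hAv.inter hBv).sub (convex_singleton q)
  -- the inner nonexpansive operator
  obtain ⟨N, hNdef⟩ : ∃ N : H → H, ∀ w,
      N w = (2 * β) • PBq ((2 * β) • PAq w - w) - ((2 * β) • PAq w - w) :=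
    ⟨_, fun w => rfl⟩
  have hTdef : ∀ w, T w = (1 - α) • w + α • N w := fun w => by
    rw [hNdef]; exact hT w
  have hNineq : ∀ a b, ‖N a - N b‖ ^ 2
      ≤ ‖a - b‖ ^ 2 - 4 * β * (1 - β) * ‖PAq a - PAq b‖ ^ 2 := by
    intro a b
    have h1 := aamr_reflect hAqv hPAq hβ0 a b
    have h2 := aamr_reflect hBqv hPBq hβ0 ((2 * β) • PAq a - a) ((2 * β) • PAq b - b)
    have h3 : (0:ℝ) ≤ 4 * β * (1 - β)
        * ‖PBq ((2 * β) • PAq a - a) - PBq ((2 * β) • PAq b - b)‖ ^ 2 :=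
      mul_nonneg (by nlinarith) (sq_nonneg _)
    rw [hNdef a, hNdef b]
    nlinarith [h1, h2, h3]
  have hNnon : ∀ a b, ‖N a - N b‖ ≤ ‖a - b‖ := by
    intro a b
    have h1 := hNineq a b
    have h2 : (0:ℝ) ≤ 4 * β * (1 - β) * ‖PAq a - PAq b‖ ^ 2 :=
      mul_nonneg (by nlinarith) (sq_nonneg _)
    have hsq : ‖N a - N b‖ ^ 2 ≤ ‖a - b‖ ^ 2 := by linarith
    have := Real.sqrt_le_sqrt hsq
    rwa [Real.sqrt_sq (norm_nonneg _), Real.sqrt_sq (norm_nonneg _)] at this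
  have hTnon : ∀ a b, ‖T a - T b‖ ≤ ‖a - b‖ := by
    intro a b
    have he : T a - T b = (1 - α) • (a - b) + α • (N a - N b) := by
      rw [hTdef a, hTdef b, smul_sub, smul_sub]
      abel
    rw [he]
    calc ‖(1 - α) • (a - b) + α • (N a - N b)‖
        ≤ ‖(1 - α) • (a - b)‖ + ‖α • (N a - N b)‖ := norm_add_le _ _
    _ = (1 - α) * ‖a - b‖ + α * ‖N a - N b‖ := by
        rw [norm_smul, norm_smul, Real.norm_eq_abs, Real.norm_eq_abs,
          abs_of_pos (by linarith), abs_of_pos hα0]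
    _ ≤ (1 - α) * ‖a - b‖ + α * ‖a - b‖ := by
        have := hNnon a b
        nlinarith
    _ = ‖a - b‖ := by ring
  -- N fixes the fixed points of T
  have hNfix : ∀ z, T z = z → N z = z := by
    intro z hz
    have h := hTdef z
    rw [hz] at h
    have e : α • (N z - z) = ((1 - α) • z + α • N z) - z := by
      rw [smul_sub]; module
    rw [← h, sub_self] at e
    rcases smul_eq_zero.1 e with h' | h'
    · exact absurd h' (ne_of_gt hα0)
    · exact sub_eq_zero.1 h'
  -- the constraint qualification gives an explicit fixed point
  obtain ⟨uu, huu, vv, hvv, huv⟩ := Set.mem_add.1 hCQ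
  obtain ⟨hpA, hNu⟩ := huu
  obtain ⟨hpB, hNv⟩ := hvv
  have hpq_memA : p - q ∈ A - {q} := (hmem A _).2 (by simpa using hpA)
  have hpq_memB : p - q ∈ B - {q} := (hmem B _).2 (by simpa using hpB)
  obtain ⟨f, hfdef⟩ : ∃ f : H, f = (p - q) + (2 - 2 * β) • uu := ⟨_, rfl⟩
  have hPAqf : PAq f = p - q := by
    refine aamr_proj_eq hAqv hPAq hpq_memA ?_
    intro c hc
    have hcA : c + q ∈ A := (hmem A c).1 hc
    have e1 : f - (p - q) = (2 - 2 * β) • uu := by rw [hfdef]; abel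
    have e2 : c - (p - q) = (c + q) - p := by abel
    rw [e1, e2, real_inner_smul_left]
    have := hNu (c + q) hcA
    nlinarith
  have hyf : (2 * β) • PAq f - f = (2 * β) • (p - q) - f := by rw [hPAqf]
  have hPBqyf : PBq ((2 * β) • (p - q) - f) = p - q := by
    refine aamr_proj_eq hBqv hPBq hpq_memB ?_
    intro c hc
    have hcB : c + q ∈ B := (hmem B c).1 hc
    have hvv' : vv = (q - p) - uu := by rw [← huv]; abel
    have e1 : ((2 * β) • (p - q) - f) - (p - q) = (2 - 2 * β) • vv := by
      rw [hvv', hfdef]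
      module
    have e2 : c - (p - q) = (c + q) - p := by abel
    rw [e1, e2, real_inner_smul_left]
    have := hNv (c + q) hcB
    nlinarith
  have hNf : N f = f := by
    rw [hNdef, hPAqf, hPBqyf]
    module
  have hTf : T f = f := by
    rw [hTdef, hNf, ← add_smul]
    rw [sub_add_cancel, one_smul]
  -- the one-step Fejér-type inequality with shadow term
  have hstep : ∀ w, ‖T w - f‖ ^ 2 + ((1 - α) / α) * ‖T w - w‖ ^ 2
      + (4 * α * β * (1 - β)) * ‖PAq w - (p - q)‖ ^ 2 ≤ ‖w - f‖ ^ 2 := by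
    intro w
    have hNwf : ‖N w - f‖ ^ 2 ≤ ‖w - f‖ ^ 2 - 4 * β * (1 - β) * ‖PAq w - (p - q)‖ ^ 2 := by
      have := hNineq w f
      rwa [hNf, hPAqf] at this
    have hTwf : T w - f = (1 - α) • (w - f) + α • (N w - f) := by
      rw [hTdef w]
      module
    have havg : ‖T w - f‖ ^ 2 = (1 - α) * ‖w - f‖ ^ 2 + α * ‖N w - f‖ ^ 2
        - α * (1 - α) * ‖(w - f) - (N w - f)‖ ^ 2 := by
      rw [hTwf, avg_norm_sq]
    have hdiffe : (w - f) - (N w - f) = w - N w := by abel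
    have hTww : ‖T w - w‖ ^ 2 = α ^ 2 * ‖w - N w‖ ^ 2 := by
      have e : T w - w = α • (N w - w) := by rw [hTdef w]; module
      rw [e, norm_smul, Real.norm_eq_abs, abs_of_pos hα0, mul_pow, norm_sub_rev]
    have e5 : ((1 - α) / α) * ‖T w - w‖ ^ 2 = (1 - α) * α * ‖w - N w‖ ^ 2 := by
      rw [hTww, ← mul_assoc]
      congr 1
      field_simp
    have hmul : α * ‖N w - f‖ ^ 2
        ≤ α * (‖w - f‖ ^ 2 - 4 * β * (1 - β) * ‖PAq w - (p - q)‖ ^ 2) :=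
      mul_le_mul_of_nonneg_left hNwf hα0.le
    rw [hdiffe] at havg
    rw [e5]
    nlinarith [havg, hmul]
  -- quantities controlled by the telescoping argument
  have hc1 : (0:ℝ) < (1 - α) / α := div_pos (by linarith) hα0
  have hc2 : (0:ℝ) < 4 * α * β * (1 - β) :=
    mul_pos (mul_pos (mul_pos four_pos hα0) hβ0) (by linarith)
  set a : ℕ → ℝ := fun n => ‖x n - f‖ ^ 2 with hadef
  have hstep' : ∀ n, a (n + 1) + ((1 - α) / α) * ‖x (n + 1) - x n‖ ^ 2
      + (4 * α * β * (1 - β)) * ‖PAq (x n) - (p - q)‖ ^ 2 ≤ a n := by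
    intro n
    have := hstep (x n)
    rwa [← hrec n] at this
  have hanti : Antitone a := by
    refine antitone_nat_of_succ_le fun n => ?_
    have h1 := hstep' n
    have h2 : (0:ℝ) ≤ ((1 - α) / α) * ‖x (n + 1) - x n‖ ^ 2 :=
      mul_nonneg hc1.le (sq_nonneg _)
    have h3 : (0:ℝ) ≤ (4 * α * β * (1 - β)) * ‖PAq (x n) - (p - q)‖ ^ 2 :=
      mul_nonneg hc2.le (sq_nonneg _)
    linarith
  have hbddb : BddBelow (Set.range a) := by
    refine ⟨0, ?_⟩
    rintro r ⟨n, rfl⟩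
    exact sq_nonneg _
  have halim : Tendsto a atTop (nhds (⨅ n, a n)) := tendsto_atTop_ciInf hanti hbddb
  have hdiff0 : Tendsto (fun n => a n - a (n + 1)) atTop (nhds 0) := by
    have h2 : Tendsto (fun n => a (n + 1)) atTop (nhds (⨅ n, a n)) :=
      halim.comp (tendsto_add_atTop_nat 1)
    simpa using halim.sub h2
  -- strong convergence of the increments
  have hsq1 : Tendsto (fun n => ‖x (n + 1) - x n‖ ^ 2) atTop (nhds 0) := by
    have hlim : Tendsto (fun n => (a n - a (n + 1)) / ((1 - α) / α)) atTop (nhds 0) := by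
      simpa using hdiff0.div_const ((1 - α) / α)
    refine squeeze_zero (fun n => sq_nonneg _) (fun n => ?_) hlim
    rw [le_div_iff₀ hc1, mul_comm]
    have h3 : (0:ℝ) ≤ (4 * α * β * (1 - β)) * ‖PAq (x n) - (p - q)‖ ^ 2 :=
      mul_nonneg hc2.le (sq_nonneg _)
    have := hstep' n
    linarith
  have hsq2 : Tendsto (fun n => ‖PAq (x n) - (p - q)‖ ^ 2) atTop (nhds 0) := by
    have hlim : Tendsto (fun n => (a n - a (n + 1)) / (4 * α * β * (1 - β))) atTop (nhds 0) := by
      simpa using hdiff0.div_const (4 * α * β * (1 - β))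
    refine squeeze_zero (fun n => sq_nonneg _) (fun n => ?_) hlim
    rw [le_div_iff₀ hc2, mul_comm]
    have h2 : (0:ℝ) ≤ ((1 - α) / α) * ‖x (n + 1) - x n‖ ^ 2 :=
      mul_nonneg hc1.le (sq_nonneg _)
    have := hstep' n
    linarith
  -- translate squared-norm convergence into norm convergence
  have hnorm_of_sq : ∀ (v : ℕ → H), Tendsto (fun n => ‖v n‖ ^ 2) atTop (nhds 0) →
      Tendsto (fun n => ‖v n‖) atTop (nhds 0) := by
    intro v hv
    have h1 : Tendsto (fun n => Real.sqrt (‖v n‖ ^ 2)) atTop (nhds (Real.sqrt 0)) :=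
      (Real.continuous_sqrt.tendsto 0).comp hv
    have h2 : (fun n => Real.sqrt (‖v n‖ ^ 2)) = fun n => ‖v n‖ := by
      funext n
      exact Real.sqrt_sq (norm_nonneg _)
    rw [h2] at h1
    simpa using h1
  have hincr : Tendsto (fun n => x (n + 1) - x n) atTop (nhds 0) :=
    tendsto_zero_iff_norm_tendsto_zero.2 (hnorm_of_sq _ hsq1)
  have hshadow0 : Tendsto (fun n => PAq (x n)) atTop (nhds (p - q)) := by
    have h := hnorm_of_sq (fun n => PAq (x n) - (p - q)) hsq2
    exact tendsto_iff_norm_sub_tendsto_zero.2 (by simpa using h)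
  -- transfer: PA (q + w) = PAq w + q
  have hPAtrans : ∀ w, PA (q + w) = PAq w + q := by
    intro w
    refine aamr_proj_eq hAv hPA ((hmem A _).1 (hPAq w).1) ?_
    intro c hc
    have hcq : c - q ∈ A - {q} := (hmem A _).2 (by simpa using hc)
    have hvar := aamr_var hAqv (hPAq w).1 (hPAq w).2 (c - q) hcq
    have e : (q + w) - (PAq w + q) = w - PAq w := by abel
    have e2 : c - (PAq w + q) = (c - q) - PAq w := by abel
    rw [e, e2]
    exact hvar
  have hshadow : Tendsto (fun n => PA (q + x n)) atTop (nhds p) := by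
    simp only [hPAtrans]
    have := hshadow0.add_const q
    simpa using this
  -- boundedness of the sequence
  have hfej : ∀ z, T z = z → ∀ n, ‖x (n + 1) - z‖ ≤ ‖x n - z‖ := by
    intro z hz n
    have := hTnon (x n) z
    rwa [hz, ← hrec n] at this
  have hxbd : ∀ n, ‖x n - f‖ ≤ ‖x 0 - f‖ := by
    intro n
    induction n with
    | zero => exact le_refl _
    | succ n ih => exact (hfej f hTf n).trans ih
  obtain ⟨M, hM⟩ : ∃ M, ∀ n, ‖x n‖ ≤ M := by
    refine ⟨‖x 0 - f‖ + ‖f‖, fun n => ?_⟩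
    calc ‖x n‖ = ‖(x n - f) + f‖ := by rw [sub_add_cancel]
    _ ≤ ‖x n - f‖ + ‖f‖ := norm_add_le _ _
    _ ≤ ‖x 0 - f‖ + ‖f‖ := by have := hxbd n; linarith
  -- asymptotic regularity
  have hreg : Tendsto (fun n => ‖T (x n) - x n‖) atTop (nhds 0) := by
    have h := hnorm_of_sq (fun n => x (n + 1) - x n) hsq1
    refine h.congr fun n => ?_
    rw [hrec n]
  -- existence of Fejér limits for fixed points
  have hFejlim : ∀ z, T z = z → ∃ L, Tendsto (fun n => ‖x n - z‖) atTop (nhds L) := by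
    intro z hz
    have hanti' : Antitone fun n => ‖x n - z‖ := antitone_nat_of_succ_le (hfej z hz)
    have hbdd' : BddBelow (Set.range fun n => ‖x n - z‖) := by
      refine ⟨0, ?_⟩
      rintro r ⟨n, rfl⟩
      exact norm_nonneg _
    exact ⟨_, tendsto_atTop_ciInf hanti' hbdd'⟩
  -- the weak limit
  obtain ⟨φ0, hφ0, z, hz⟩ := aamr_weak_cluster x M hM
  have hTz : T z = z := by
    refine aamr_demiclosed hTnon (fun k => x (φ0 k)) z M (fun k => hM _) hz ?_
    exact hreg.comp hφ0.tendsto_atTop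
  -- weak convergence of the full sequence to z
  have hweakfull : ∀ y, Tendsto (fun n => ⟪x n, y⟫) atTop (nhds ⟪z, y⟫) := by
    intro y
    refine tendsto_of_subseq_tendsto fun ns hns => ?_
    obtain ⟨φ1, hφ1, z1, hz1⟩ := aamr_weak_cluster (fun k => x (ns k)) M (fun k => hM _)
    have hns1 : Tendsto (fun k => ns (φ1 k)) atTop atTop := hns.comp hφ1.tendsto_atTop
    have hTz1 : T z1 = z1 := by
      refine aamr_demiclosed hTnon (fun k => x (ns (φ1 k))) z1 M (fun k => hM _) hz1 ?_
      exact hreg.comp hns1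
    -- Opial: the two weak cluster points coincide
    obtain ⟨Lz, hLz⟩ := hFejlim z hTz
    obtain ⟨Lz1, hLz1⟩ := hFejlim z1 hTz1
    have hdlim : Tendsto (fun n => ⟪x n, z - z1⟫) atTop
        (nhds ((Lz1 ^ 2 - Lz ^ 2 + ‖z‖ ^ 2 - ‖z1‖ ^ 2) / 2)) := by
      have hid : ∀ n, ⟪x n, z - z1⟫
          = (‖x n - z1‖ ^ 2 - ‖x n - z‖ ^ 2 + ‖z‖ ^ 2 - ‖z1‖ ^ 2) / 2 := by
        intro n
        rw [inner_sub_right, norm_sub_sq_real, norm_sub_sq_real]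
        ring
      simp only [hid]
      exact ((((hLz1.pow 2).sub (hLz.pow 2)).add_const (‖z‖ ^ 2)).sub_const
        (‖z1‖ ^ 2)).div_const 2
    have h1 : ⟪z, z - z1⟫ = (Lz1 ^ 2 - Lz ^ 2 + ‖z‖ ^ 2 - ‖z1‖ ^ 2) / 2 :=
      tendsto_nhds_unique (hz (z - z1)) (hdlim.comp hφ0.tendsto_atTop)
    have h2 : ⟪z1, z - z1⟫ = (Lz1 ^ 2 - Lz ^ 2 + ‖z‖ ^ 2 - ‖z1‖ ^ 2) / 2 :=
      tendsto_nhds_unique (hz1 (z - z1)) (hdlim.comp hns1)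
    have h3 : ⟪z - z1, z - z1⟫ = 0 := by
      rw [inner_sub_left, h1, h2]
      ring
    have h4 : z1 = z := by
      have := inner_self_eq_zero.1 h3
      have := sub_eq_zero.1 this
      exact this.symm
    exact ⟨φ1, by rw [← h4]; exact hz1 y⟩
  -- the projection identity at the weak limit
  have hPAqz : PAq z = p - q := by
    have hNzz : N z = z := hNfix z hTz
    obtain ⟨az, hazdef⟩ : ∃ az : H, az = PAq z := ⟨_, rfl⟩
    obtain ⟨yz, hyzdef⟩ : ∃ yz : H, yz = (2 * β) • az - z := ⟨_, rfl⟩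
    have hPBqyz : PBq yz = az := by
      have h := hNdef z
      rw [hNzz, ← hazdef, ← hyzdef] at h
      -- h : z = (2β) • PBq yz - yz
      have h2 : (2 * β) • PBq yz = (2 * β) • az := by
        have e : (2 * β) • PBq yz = z + yz := by
          rw [h]
          abel
        rw [e, hyzdef]
        module
      have h2β : (2 * β : ℝ) ≠ 0 := by positivity
      exact smul_right_injective H h2β h2
    have hazA : az ∈ A - {q} := by rw [hazdef]; exact (hPAq z).1
    have hazB : az ∈ B - {q} := by rw [← hPBqyz]; exact (hPBq yz).1
    have hazmem : az ∈ (A ∩ B) - {q} :=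
      (hmem _ _).2 ⟨(hmem A _).1 hazA, (hmem B _).1 hazB⟩
    have hva : ∀ c ∈ A - {q}, ⟪z - az, c - az⟫ ≤ 0 := by
      intro c hc
      have := aamr_var hAqv (hPAq z).1 (hPAq z).2 c hc
      rwa [← hazdef] at this
    have hvb : ∀ c ∈ B - {q}, ⟪yz - az, c - az⟫ ≤ 0 := by
      intro c hc
      have := aamr_var hBqv (hPBq yz).1 (hPBq yz).2 c hc
      rwa [hPBqyz] at this
    have hvar0 : ∀ c ∈ (A ∩ B) - {q}, ⟪(0:H) - az, c - az⟫ ≤ 0 := by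
      intro c hc
      have hcq : c + q ∈ A ∩ B := (hmem _ _).1 hc
      have hcA : c ∈ A - {q} := (hmem A _).2 hcq.1
      have hcB : c ∈ B - {q} := (hmem B _).2 hcq.2
      have h1 := hva c hcA
      have h2 := hvb c hcB
      have hsum : ⟪(z - az) + (yz - az), c - az⟫ ≤ 0 := by
        rw [inner_add_left]
        linarith
      have he : (z - az) + (yz - az) = (2 * β - 2) • az := by
        rw [hyzdef]
        module
      rw [he, real_inner_smul_left] at hsum
      have ht : (0:ℝ) ≤ ⟪az, c - az⟫ := by
        by_contra hlt
        push_neg at hlt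
        have : (0:ℝ) < (2 * β - 2) * ⟪az, c - az⟫ :=
          mul_pos_of_neg_of_neg (by linarith) hlt
        linarith
      rw [zero_sub, inner_neg_left]
      linarith
    have hpqmem : p - q ∈ (A ∩ B) - {q} := (hmem _ _).2 (by simpa using hp.1)
    have hvarp : ∀ c ∈ (A ∩ B) - {q}, ⟪(0:H) - (p - q), c - (p - q)⟫ ≤ 0 := by
      refine aamr_var hABqv hpqmem ?_
      intro c hc
      have hcq : c + q ∈ A ∩ B := (hmem _ _).1 hc
      have h := hp.2 (c + q) hcq
      have e1 : (0:H) - (p - q) = q - p := by abel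
      have e2 : (0:H) - c = q - (c + q) := by abel
      rw [e1, e2]
      exact h
    rw [← hazdef]
    exact aamr_eq_of_var hazmem hvar0 hpqmem hvarp
  have hPAz : PA (q + z) = p := by
    rw [hPAtrans z, hPAqz]
    abel
  exact ⟨z, hTz, hPAz, hweakfull, hincr, hshadow⟩
end

section
/- Let H be a real Hilbert space, let A, B ⊆ H be closed affine subspaces with A ∩ B ≠ ∅, let α, β ∈ (0, 1), and let q ∈ H satisfy q − P_{A∩B}(q) ∈ (A − A)^⊥ + (B − B)^⊥. Given any x₀ ∈ H, define x_{n+1} = T_{A−q,B−q,α,β}(x_n) for n ≥ 0. Then the set Fix T_{A−q,B−q,α,β} is nonempty, closed and convex, and the sequence (x_n) converges strongly (in norm) to the projection of x₀ onto Fix T_{A−q,B−q,α,β}. -/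
open RealInnerProductSpace Pointwise Filter
lemma quad_zero {c r : ℝ} (h : ∀ t : ℝ, 2*(t*r) ≤ t^2*c) : r = 0 := by
  have hc : 0 ≤ c := by nlinarith [h 1, h (-1)]
  have hc1 : (0:ℝ) < c + 1 := by linarith
  have h2 := h (r/(c+1))
  rw [div_pow] at h2
  have h3 := mul_le_mul_of_nonneg_right h2 (le_of_lt (by positivity : (0:ℝ) < (c+1)^2))
  have e1 : 2*(r/(c+1)*r) * (c+1)^2 = 2*r^2*(c+1) := by field_simp
  have e2 : r^2/(c+1)^2*c*(c+1)^2 = r^2*c := by field_simp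
  rw [e1, e2] at h3
  nlinarith [sq_nonneg r]

lemma R_norm {H : Type*} [NormedAddCommGroup H] [InnerProductSpace ℝ H] (β : ℝ)
    (p : H → H) (h : ∀ y, ⟪p y, y⟫ = ‖p y‖^2) (y : H) :
    ‖(2*β) • p y - y‖^2 = ‖y‖^2 - 4*β*(1-β)*‖p y‖^2 := by
  have e := norm_sub_sq_real ((2*β) • p y) y
  rw [real_inner_smul_left, h y, norm_smul] at e
  rw [e, Real.norm_eq_abs, mul_pow, sq_abs]
  ring

lemma fix_char {H : Type*} [NormedAddCommGroup H] [InnerProductSpace ℝ H]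
    {α β : ℝ} (hα0 : 0 < α) (hβ0 : 0 < β) (hβ1 : β < 1)
    (p1 p2 : H → H)
    (h1 : ∀ y, ⟪p1 y, y⟫ = ‖p1 y‖^2) (h2 : ∀ y, ⟪p2 y, y⟫ = ‖p2 y‖^2)
    (h2n : ∀ y, p2 (-y) = -p2 y)
    (f : H)
    (hf : (1-α) • f + α • ((2*β) • p2 ((2*β) • p1 f - f) - ((2*β) • p1 f - f)) = f) :
    p1 f = 0 ∧ p2 f = 0 := by
  set g := (2*β) • p1 f - f with hg
  have hN : (2*β) • p2 g - g = f := by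
    have h' : α • ((2*β) • p2 g - g) = α • f := by
      linear_combination (norm := module) hf
    exact smul_right_injective H (ne_of_gt hα0) h'
  have e1 := R_norm β p1 h1 f
  have e2 := R_norm β p2 h2 g
  rw [hN] at e2
  rw [← hg] at e1
  have hk : 0 < 4*β*(1-β) := by nlinarith
  have hsum : 4*β*(1-β)*‖p1 f‖^2 + 4*β*(1-β)*‖p2 g‖^2 = 0 := by linarith
  have hp1 : p1 f = 0 := by
    have : ‖p1 f‖^2 = 0 := by nlinarith [sq_nonneg ‖p1 f‖, sq_nonneg ‖p2 g‖]
    rwa [pow_eq_zero_iff (two_ne_zero), norm_eq_zero] at this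
  have hp2g : p2 g = 0 := by
    have : ‖p2 g‖^2 = 0 := by nlinarith [sq_nonneg ‖p1 f‖, sq_nonneg ‖p2 g‖]
    rwa [pow_eq_zero_iff (two_ne_zero), norm_eq_zero] at this
  have hgf : g = -f := by rw [hg, hp1]; simp
  refine ⟨hp1, ?_⟩
  have := h2n f
  rw [← hgf, hp2g] at this
  simpa using this.symm

lemma proj_formula {H : Type*} [NormedAddCommGroup H] [InnerProductSpace ℝ H]
    (M : Submodule ℝ H) [Submodule.HasOrthogonalProjection M] (v : H) (Pf : H → H)
    (hPf : ∀ x, Pf x ∈ {v} + (M : Set H) ∧ ∀ c ∈ {v} + (M : Set H), ‖x - Pf x‖ ≤ ‖x - c‖)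
    (x : H) : Pf x = v - (Submodule.orthogonalProjectionOnto M v : H) + (Submodule.orthogonalProjectionOnto M x : H) := by
  obtain ⟨hmem, hmin⟩ := hPf x
  obtain ⟨m, hm, hPfx⟩ : ∃ m ∈ (M : Set H), Pf x = v + m := by
    rw [Set.mem_add] at hmem
    obtain ⟨s, hs, t, ht, hst⟩ := hmem
    rw [Set.mem_singleton_iff] at hs
    exact ⟨t, ht, by rw [← hst, hs]⟩
  have horth : ∀ w ∈ M, ⟪x - Pf x, w⟫ = 0 := by
    intro w hw
    apply quad_zero (c := ‖w‖^2)
    intro t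
    have hc : v + (m + t • w) ∈ {v} + (M : Set H) := by
      rw [Set.mem_add]
      exact ⟨v, rfl, m + t • w, M.add_mem hm (M.smul_mem t hw), rfl⟩
    have hle := hmin _ hc
    have hx : x - (v + (m + t • w)) = (x - Pf x) - t • w := by rw [hPfx]; abel
    rw [hx] at hle
    have hsq : ‖x - Pf x‖^2 ≤ ‖(x - Pf x) - t • w‖^2 :=
      pow_le_pow_left₀ (norm_nonneg _) hle 2
    rw [norm_sub_sq_real (x - Pf x) (t • w), real_inner_smul_right, norm_smul,
      Real.norm_eq_abs, mul_pow, sq_abs] at hsq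
    linarith
  set u := v - (Submodule.orthogonalProjectionOnto M v : H) + (Submodule.orthogonalProjectionOnto M x : H) with hu
  have hdM : Pf x - u ∈ M := by
    have : Pf x - u = m + (Submodule.orthogonalProjectionOnto M v : H) - (Submodule.orthogonalProjectionOnto M x : H) := by
      rw [hPfx, hu]; abel
    rw [this]
    exact M.sub_mem (M.add_mem hm (SetLike.coe_mem _)) (SetLike.coe_mem _)
  have hxv : x - u = (x - (Submodule.orthogonalProjectionOnto M x : H)) - (v - (Submodule.orthogonalProjectionOnto M v : H)) := by
    rw [hu]; abel
  have hdO : ∀ w ∈ M, ⟪Pf x - u, w⟫ = 0 := by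
    intro w hw
    have hv1 : ⟪x - (Submodule.orthogonalProjectionOnto M x : H), w⟫ = 0 := by
      rw [real_inner_comm]
      exact (Submodule.mem_orthogonal M _).1 (Submodule.sub_starProjection_mem_orthogonal x) w hw
    have hv2 : ⟪v - (Submodule.orthogonalProjectionOnto M v : H), w⟫ = 0 := by
      rw [real_inner_comm]
      exact (Submodule.mem_orthogonal M _).1 (Submodule.sub_starProjection_mem_orthogonal v) w hw
    have hsplit : Pf x - u = (x - u) - (x - Pf x) := by abel
    rw [hsplit, inner_sub_left, hxv, inner_sub_left, hv1, hv2, horth w hw]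
    ring
  have hzero : ⟪Pf x - u, Pf x - u⟫ = 0 := hdO _ hdM
  have := inner_self_eq_zero.1 hzero
  exact sub_eq_zero.1 this

lemma proj_inner_self {H : Type*} [NormedAddCommGroup H] [InnerProductSpace ℝ H]
    (M : Submodule ℝ H) [Submodule.HasOrthogonalProjection M] (y : H) :
    ⟪((Submodule.orthogonalProjectionOnto M y : H)), y⟫ = ‖(Submodule.orthogonalProjectionOnto M y : H)‖^2 := by
  have h := Submodule.sub_starProjection_mem_orthogonal (K := M) y
  have h0 : ⟪(Submodule.orthogonalProjectionOnto M y : H), y - (Submodule.orthogonalProjectionOnto M y : H)⟫ = 0 := by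
    rw [real_inner_comm]
    exact ((Submodule.mem_orthogonal' M _).1 h) _ (SetLike.coe_mem _)
  have h1 : ⟪(Submodule.orthogonalProjectionOnto M y : H), y⟫
      = ⟪(Submodule.orthogonalProjectionOnto M y : H), (Submodule.orthogonalProjectionOnto M y : H)⟫
        + ⟪(Submodule.orthogonalProjectionOnto M y : H), y - (Submodule.orthogonalProjectionOnto M y : H)⟫ := by
    rw [← inner_add_right]
    congr 1
    abel
  rw [h1, h0, real_inner_self_eq_norm_sq]
  ring

lemma convex_norm_id {H : Type*} [NormedAddCommGroup H] [InnerProductSpace ℝ H]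
    (α : ℝ) (u v : H) :
    ‖(1-α) • u + α • v‖^2 = (1-α)*‖u‖^2 + α*‖v‖^2 - α*(1-α)*‖u - v‖^2 := by
  have h1 : ‖(1-α) • u + α • v‖^2 = ⟪(1-α) • u + α • v, (1-α) • u + α • v⟫ :=
    (real_inner_self_eq_norm_sq _).symm
  rw [h1]
  simp only [inner_add_left, inner_add_right, real_inner_smul_left, real_inner_smul_right]
  simp only [real_inner_self_eq_norm_sq]
  rw [norm_sub_sq_real, real_inner_comm v u]
  ring

set_option maxHeartbeats 1000000 in
/-- For closed affine subspaces `A, B` with `A ∩ B ≠ ∅` and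
`q − P_{A∩B}(q) ∈ (A−A)^⊥ + (B−B)^⊥`, the set of fixed points of `T_{A−q,B−q,α,β}` is
nonempty, closed and convex, and the AAMR iterates converge strongly to the projection
of `x₀ = x 0` onto this fixed point set. -/
theorem stmt_16 {H : Type*} [NormedAddCommGroup H] [InnerProductSpace ℝ H] [CompleteSpace H]
    (A B : Set H)
    (MA MB : Submodule ℝ H) (hMA : IsClosed (MA : Set H)) (hMB : IsClosed (MB : Set H))
    (a b : H) (hA : A = {a} + (MA : Set H)) (hB : B = {b} + (MB : Set H))
    (hAB : (A ∩ B).Nonempty)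
    (α β : ℝ) (hα : α ∈ Set.Ioo (0 : ℝ) 1) (hβ : β ∈ Set.Ioo (0 : ℝ) 1)
    (q : H)
    (PAq PBq : H → H)
    (hPAq : ∀ x, PAq x ∈ A - {q} ∧ ∀ c ∈ A - {q}, ‖x - PAq x‖ ≤ ‖x - c‖)
    (hPBq : ∀ x, PBq x ∈ B - {q} ∧ ∀ c ∈ B - {q}, ‖x - PBq x‖ ≤ ‖x - c‖)
    (p : H) (hp : p ∈ A ∩ B ∧ ∀ y ∈ A ∩ B, ‖q - p‖ ≤ ‖q - y‖)
    (hCQ : q - p ∈ {u : H | ∀ s ∈ A - A, ⟪s, u⟫ = 0} + {u : H | ∀ s ∈ B - B, ⟪s, u⟫ = 0})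
    (T : H → H)
    (hT : ∀ x, T x =
      (1 - α) • x + α • ((2 * β) • PBq ((2 * β) • PAq x - x) - ((2 * β) • PAq x - x)))
    (x : ℕ → H) (hrec : ∀ n, x (n + 1) = T (x n)) :
    {z | T z = z}.Nonempty ∧ IsClosed {z | T z = z} ∧ Convex ℝ {z | T z = z} ∧
      ∃ w, (w ∈ {z | T z = z} ∧ ∀ z ∈ {z | T z = z}, ‖x 0 - w‖ ≤ ‖x 0 - z‖) ∧
        Tendsto x atTop (nhds w) := by
  obtain ⟨hα0, hα1⟩ := hα
  obtain ⟨hβ0, hβ1⟩ := hβ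
  obtain ⟨⟨hpA, hpB⟩, -⟩ := hp
  haveI iMA : CompleteSpace MA := hMA.completeSpace_coe
  haveI iMB : CompleteSpace MB := hMB.completeSpace_coe
  set pA : H →L[ℝ] H := MA.subtypeL.comp (Submodule.orthogonalProjectionOnto MA) with hpAdef
  set pB : H →L[ℝ] H := MB.subtypeL.comp (Submodule.orthogonalProjectionOnto MB) with hpBdef
  have hpA_apply : ∀ y, pA y = (Submodule.orthogonalProjectionOnto MA y : H) := fun y => rfl
  have hpB_apply : ∀ y, pB y = (Submodule.orthogonalProjectionOnto MB y : H) := fun y => rfl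
  -- basic membership lemma for translated submodules
  have hmemS : ∀ (v : H) (M : Submodule ℝ H) (z : H),
      z ∈ ({v} + (M : Set H)) ↔ ∃ m ∈ M, z = v + m := by
    intro v M z
    rw [Set.mem_add]
    constructor
    · rintro ⟨s, hs, t, ht, hst⟩
      rw [Set.mem_singleton_iff] at hs
      exact ⟨t, ht, by rw [← hst, hs]⟩
    · rintro ⟨m, hm, rfl⟩
      exact ⟨v, rfl, m, hm, rfl⟩
  have hshift : ∀ (v : H) (M : Submodule ℝ H),
      (({v} + (M : Set H)) - {q} : Set H) = {v - q} + (M : Set H) := by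
    intro v M
    ext z
    rw [Set.mem_sub, hmemS]
    constructor
    · rintro ⟨s, hs, t, ht, hst⟩
      rw [Set.mem_singleton_iff] at ht
      rw [hmemS] at hs
      obtain ⟨m, hm, rfl⟩ := hs
      exact ⟨m, hm, by rw [← hst, ht]; abel⟩
    · rintro ⟨m, hm, rfl⟩
      exact ⟨v + m, (hmemS v M _).2 ⟨m, hm, rfl⟩, q, rfl, by abel⟩
  have hAA : ∀ (v : H) (M : Submodule ℝ H),
      (({v} + (M : Set H)) - ({v} + (M : Set H)) : Set H) = (M : Set H) := by
    intro v M
    ext z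
    rw [Set.mem_sub]
    constructor
    · rintro ⟨s, hs, t, ht, hst⟩
      rw [hmemS] at hs ht
      obtain ⟨m1, hm1, rfl⟩ := hs
      obtain ⟨m2, hm2, rfl⟩ := ht
      have : z = m1 - m2 := by rw [← hst]; abel
      rw [this]
      exact M.sub_mem hm1 hm2
    · intro hz
      exact ⟨v + z, (hmemS v M _).2 ⟨z, hz, rfl⟩, v + 0, (hmemS v M _).2 ⟨0, M.zero_mem, rfl⟩,
        by abel⟩
  -- projector formulas
  simp only [hA, hshift a MA] at hPAq
  simp only [hB, hshift b MB] at hPBq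
  set cA : H := (a - q) - pA (a - q) with hcA
  set cB : H := (b - q) - pB (b - q) with hcB
  have hPA : ∀ z, PAq z = cA + pA z := by
    intro z
    rw [proj_formula MA (a - q) PAq hPAq z, hcA, hpA_apply, hpA_apply]
  have hPB : ∀ z, PBq z = cB + pB z := by
    intro z
    rw [proj_formula MB (b - q) PBq hPBq z, hcB, hpB_apply, hpB_apply]
  -- inner product facts
  have hIPA : ∀ y, ⟪pA y, y⟫ = ‖pA y‖^2 := fun y => proj_inner_self MA y
  have hIPB : ∀ y, ⟪pB y, y⟫ = ‖pB y‖^2 := fun y => proj_inner_self MB y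
  have hsaA : ∀ u v, ⟪pA u, v⟫ = ⟪u, pA v⟫ := fun u v =>
    Submodule.inner_starProjection_left_eq_right MA u v
  have hsaB : ∀ u v, ⟪pB u, v⟫ = ⟪u, pB v⟫ := fun u v =>
    Submodule.inner_starProjection_left_eq_right MB u v
  have hmemA : ∀ m ∈ MA, pA m = m := by
    intro m hm
    rw [hpA_apply, ← Submodule.starProjection_apply, Submodule.starProjection_eq_self_iff]
    exact hm
  have hmemB : ∀ m ∈ MB, pB m = m := by
    intro m hm
    rw [hpB_apply, ← Submodule.starProjection_apply, Submodule.starProjection_eq_self_iff]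
    exact hm
  have hzeroA : ∀ v, (∀ m ∈ MA, ⟪m, v⟫ = 0) → pA v = 0 := by
    intro v hv
    rw [hpA_apply]
    have : Submodule.orthogonalProjectionOnto MA v = 0 :=
      Submodule.orthogonalProjectionOnto_eq_zero_iff.2 ((Submodule.mem_orthogonal MA v).2 hv)
    rw [this]; rfl
  have hzeroB : ∀ v, (∀ m ∈ MB, ⟪m, v⟫ = 0) → pB v = 0 := by
    intro v hv
    rw [hpB_apply]
    have : Submodule.orthogonalProjectionOnto MB v = 0 :=
      Submodule.orthogonalProjectionOnto_eq_zero_iff.2 ((Submodule.mem_orthogonal MB v).2 hv)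
    rw [this]; rfl
  -- decomposition of q - p
  rw [Set.mem_add] at hCQ
  obtain ⟨u', hu', v', hv', huv⟩ := hCQ
  rw [Set.mem_setOf_eq] at hu' hv'
  rw [hA, hAA a MA] at hu'
  rw [hB, hAA b MB] at hv'
  have hpAu' : pA u' = 0 := hzeroA u' (fun m hm => hu' m hm)
  have hpBv' : pB v' = 0 := hzeroB v' (fun m hm => hv' m hm)
  have hpaMA : p - a ∈ MA := by
    rw [hA, hmemS] at hpA
    obtain ⟨m, hm, rfl⟩ := hpA
    simpa using hm
  have hpbMB : p - b ∈ MB := by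
    rw [hB, hmemS] at hpB
    obtain ⟨m, hm, rfl⟩ := hpB
    simpa using hm
  -- the explicit fixed point
  set z₀ : H := (p - q) + (2 - 2*β) • u' with hz₀
  have hpApq : pA (p - q) = (p - a) + pA (a - q) := by
    have h : p - q = (p - a) + (a - q) := by abel
    rw [h, map_add, hmemA _ hpaMA]
  have hpBpq : pB (p - q) = (p - b) + pB (b - q) := by
    have h : p - q = (p - b) + (b - q) := by abel
    rw [h, map_add, hmemB _ hpbMB]
  have hpBu' : pB u' = -(pB (p - q)) := by
    have h : u' = (q - p) - v' := eq_sub_of_add_eq huv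
    rw [h, map_sub, hpBv', show q - p = -(p - q) by abel, map_neg]
    abel
  have hPAz₀ : PAq z₀ = p - q := by
    rw [hPA z₀, hz₀, map_add, map_smul, hpAu', smul_zero, add_zero, hpApq, hcA]
    abel
  have hPBy₀ : PBq ((2*β) • PAq z₀ - z₀) = p - q := by
    rw [hPAz₀, hPB _]
    have hexp : pB ((2*β) • (p - q) - z₀) = pB (p - q) := by
      rw [map_sub, map_smul, hz₀, map_add, map_smul, hpBu']
      have h4 : (2*β) • pB (p-q) - (pB (p-q) + (2 - 2*β) • -pB (p-q)) = pB (p - q) := by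
        module
      exact h4
    rw [hexp, hpBpq, hcB]
    abel
  have hfixz₀ : T z₀ = z₀ := by
    rw [hT z₀, hPBy₀, hPAz₀]
    module
  -- the linear part
  set RA : H →L[ℝ] H := (2*β) • pA - ContinuousLinearMap.id ℝ H with hRAdef
  set RB : H →L[ℝ] H := (2*β) • pB - ContinuousLinearMap.id ℝ H with hRBdef
  set Q : H →L[ℝ] H := (1-α) • ContinuousLinearMap.id ℝ H + α • (RB.comp RA) with hQdef
  set Q' : H →L[ℝ] H := (1-α) • ContinuousLinearMap.id ℝ H + α • (RA.comp RB) with hQ'def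
  have hRAap : ∀ y, RA y = (2*β) • pA y - y := by
    intro y
    simp [hRAdef, ContinuousLinearMap.sub_apply, ContinuousLinearMap.smul_apply]
  have hRBap : ∀ y, RB y = (2*β) • pB y - y := by
    intro y
    simp [hRBdef, ContinuousLinearMap.sub_apply, ContinuousLinearMap.smul_apply]
  have hQap : ∀ y, Q y = (1-α) • y + α • (RB (RA y)) := by
    intro y
    simp [hQdef, ContinuousLinearMap.add_apply, ContinuousLinearMap.smul_apply]
  have hQ'ap : ∀ y, Q' y = (1-α) • y + α • (RA (RB y)) := by
    intro y
    simp [hQ'def, ContinuousLinearMap.add_apply, ContinuousLinearMap.smul_apply]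
  -- T is affine with linear part Q
  have haffine : ∀ x1 x2, T x1 - T x2 = Q (x1 - x2) := by
    intro x1 x2
    rw [hT x1, hT x2, hPA x1, hPA x2, hPB _, hPB _, hQap, hRAap]
    simp only [map_sub, map_add, map_smul, hRBap, hRAap]
    module
  have hTz : ∀ z, T z = z₀ + Q (z - z₀) := by
    intro z
    have h := haffine z z₀
    rw [hfixz₀] at h
    linear_combination (norm := module) h
  have hSiff : ∀ z, T z = z ↔ Q (z - z₀) = z - z₀ := by
    intro z
    constructor
    · intro h
      have h2 := hTz z
      rw [h] at h2
      rw [← sub_eq_iff_eq_add'] at h2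
      exact h2.symm
    · intro h
      rw [hTz z, h]
      abel
  -- norm identities
  have heRA : ∀ y, ‖RA y‖^2 = ‖y‖^2 - 4*β*(1-β)*‖pA y‖^2 := by
    intro y
    rw [hRAap y]
    exact R_norm β (⇑pA) hIPA y
  have heRB : ∀ y, ‖RB y‖^2 = ‖y‖^2 - 4*β*(1-β)*‖pB y‖^2 := by
    intro y
    rw [hRBap y]
    exact R_norm β (⇑pB) hIPB y
  have hQdrop : ∀ y, ((1-β) + 2*β*(1-α)) * ‖y - Q y‖^2 ≤ 2*β*α*(‖y‖^2 - ‖Q y‖^2) := by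
    intro y
    have e1 := heRA y
    have e2 := heRB (RA y)
    have e4 : ‖Q y‖^2 = (1-α)*‖y‖^2 + α*‖RB (RA y)‖^2 - α*(1-α)*‖y - RB (RA y)‖^2 := by
      rw [hQap y]
      exact convex_norm_id α y (RB (RA y))
    have e5 : y - Q y = α • (y - RB (RA y)) := by
      rw [hQap y]
      module
    have e5' : ‖y - Q y‖^2 = α^2 * ‖y - RB (RA y)‖^2 := by
      rw [e5, norm_smul, Real.norm_eq_abs, mul_pow, sq_abs]
    have e6 : y - RB (RA y) = (2*β) • (pA y - pB (RA y)) := by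
      rw [hRBap (RA y), hRAap y]
      module
    have hD : ‖y - RB (RA y)‖^2 ≤ 8*β^2 * (‖pA y‖^2 + ‖pB (RA y)‖^2) := by
      rw [e6, norm_smul, Real.norm_eq_abs, mul_pow, sq_abs]
      have h8 : ‖pA y - pB (RA y)‖^2 ≤ 2*‖pA y‖^2 + 2*‖pB (RA y)‖^2 := by
        rw [norm_sub_sq_real]
        nlinarith [neg_abs_le (⟪pA y, pB (RA y)⟫), abs_real_inner_le_norm (pA y) (pB (RA y)),
          sq_nonneg (‖pA y‖ - ‖pB (RA y)‖)]
      calc (2*β)^2 * ‖pA y - pB (RA y)‖^2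
          ≤ (2*β)^2 * (2*‖pA y‖^2 + 2*‖pB (RA y)‖^2) :=
            mul_le_mul_of_nonneg_left h8 (sq_nonneg _)
        _ = 8*β^2 * (‖pA y‖^2 + ‖pB (RA y)‖^2) := by ring
    have hys : ‖y‖^2 - ‖Q y‖^2
        = α*(4*β*(1-β))*(‖pA y‖^2 + ‖pB (RA y)‖^2) + α*(1-α)*‖y - RB (RA y)‖^2 := by
      linear_combination (-1 : ℝ)*e4 - α*e2 - α*e1
    have hscal : ((1-β) + 2*β*(1-α))*‖y - RB (RA y)‖^2
        ≤ 8*β^2*(1-β)*(‖pA y‖^2 + ‖pB (RA y)‖^2) + 2*β*(1-α)*‖y - RB (RA y)‖^2 := by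
      have h9 : (1-β) * ‖y - RB (RA y)‖^2
          ≤ (1-β) * (8*β^2 * (‖pA y‖^2 + ‖pB (RA y)‖^2)) :=
        mul_le_mul_of_nonneg_left hD (by linarith)
      nlinarith [h9]
    calc ((1-β) + 2*β*(1-α)) * ‖y - Q y‖^2
        = α^2 * (((1-β) + 2*β*(1-α))*‖y - RB (RA y)‖^2) := by rw [e5']; ring
      _ ≤ α^2 * (8*β^2*(1-β)*(‖pA y‖^2 + ‖pB (RA y)‖^2)
            + 2*β*(1-α)*‖y - RB (RA y)‖^2) := mul_le_mul_of_nonneg_left hscal (sq_nonneg α)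
      _ = 2*β*α*(α*(4*β*(1-β))*(‖pA y‖^2 + ‖pB (RA y)‖^2)
            + α*(1-α)*‖y - RB (RA y)‖^2) := by ring
      _ = 2*β*α*(‖y‖^2 - ‖Q y‖^2) := by rw [hys]
  have hQnonexp : ∀ y, ‖Q y‖ ≤ ‖y‖ := by
    intro y
    have h1 := hQdrop y
    have hμ : 0 < (1-β) + 2*β*(1-α) := by nlinarith
    have hsq : ‖Q y‖^2 ≤ ‖y‖^2 := by nlinarith [sq_nonneg ‖y - Q y‖, mul_pos hβ0 hα0]
    have := Real.sqrt_le_sqrt hsq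
    rwa [Real.sqrt_sq (norm_nonneg _), Real.sqrt_sq (norm_nonneg _)] at this
  have hQnn : ∀ n (y : H), ‖(Q^n) y‖ ≤ ‖y‖ := by
    intro n
    induction n with
    | zero => intro y; simp
    | succ n ih =>
      intro y
      have h1 : (Q^(n+1)) y = Q ((Q^n) y) := by rw [pow_succ']; rfl
      rw [h1]
      exact le_trans (hQnonexp _) (ih y)
  -- characterization of fixed vectors of Q
  have hfixQ : ∀ f : H, Q f = f → pA f = 0 ∧ pB f = 0 := by
    intro f hf
    refine fix_char hα0 hβ0 hβ1 (⇑pA) (⇑pB) hIPA hIPB (fun y => map_neg pB y) f ?_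
    have h1 := hQap f
    rw [hRAap f, hRBap _] at h1
    rw [← h1]
    exact hf
  have hfixQrev : ∀ f : H, pA f = 0 → pB f = 0 → Q f = f := by
    intro f h1 h2
    rw [hQap f, hRAap f, h1, hRBap _]
    rw [smul_zero, zero_sub, map_neg, h2]
    module
  have hfixQ'rev : ∀ f : H, pA f = 0 → pB f = 0 → Q' f = f := by
    intro f h1 h2
    rw [hQ'ap f, hRBap f, h2, hRAap _]
    rw [smul_zero, zero_sub, map_neg, h1]
    module
  -- adjoint relation
  have hsaRA : ∀ u w, ⟪RA u, w⟫ = ⟪u, RA w⟫ := by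
    intro u w
    rw [hRAap u, hRAap w, inner_sub_left, inner_sub_right, real_inner_smul_left,
      real_inner_smul_right, hsaA]
  have hsaRB : ∀ u w, ⟪RB u, w⟫ = ⟪u, RB w⟫ := by
    intro u w
    rw [hRBap u, hRBap w, inner_sub_left, inner_sub_right, real_inner_smul_left,
      real_inner_smul_right, hsaB]
  have hsaQ : ∀ u w, ⟪Q u, w⟫ = ⟪u, Q' w⟫ := by
    intro u w
    rw [hQap u, hQ'ap w, inner_add_left, inner_add_right, real_inner_smul_left,
      real_inner_smul_right, real_inner_smul_left, real_inner_smul_right,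
      hsaRB (RA u) w, hsaRA u (RB w)]
  -- the fixed subspace
  set Sg : H →L[ℝ] H := ContinuousLinearMap.id ℝ H - Q with hSgdef
  have hSgap : ∀ y, Sg y = y - Q y := by
    intro y
    simp [hSgdef, ContinuousLinearMap.sub_apply]
  set F : Submodule ℝ H := LinearMap.ker (Sg : H →ₗ[ℝ] H) with hFdef
  have hFiff : ∀ v : H, v ∈ F ↔ Q v = v := by
    intro v
    rw [hFdef, LinearMap.mem_ker]
    show Sg v = 0 ↔ _
    rw [hSgap, sub_eq_zero, eq_comm]
  have hFclosed : IsClosed (F : Set H) := ContinuousLinearMap.isClosed_ker Sg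
  haveI iF : CompleteSpace F := hFclosed.completeSpace_coe
  set Rng : Submodule ℝ H := LinearMap.range (Sg : H →ₗ[ℝ] H) with hRngdef
  have hRngOrth : Rngᗮ = F := by
    ext v
    rw [Submodule.mem_orthogonal]
    constructor
    · intro hv
      have h0 : ∀ y : H, ⟪y - Q y, v⟫ = 0 := by
        intro y
        have := hv (Sg y) (LinearMap.mem_range.2 ⟨y, rfl⟩)
        rwa [hSgap] at this
      have h1 : ∀ y : H, ⟪y, v - Q' v⟫ = 0 := by
        intro y
        have h2 := h0 y
        rw [inner_sub_left, hsaQ y v] at h2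
        rw [inner_sub_right]
        linarith
      have h2 : Q' v = v := by
        have h3 := h1 (v - Q' v)
        have h4 := inner_self_eq_zero.1 h3
        exact (sub_eq_zero.1 h4).symm
      have h5 : (1-α) • v + α • ((2*β) • pA ((2*β) • pB v - v) - ((2*β) • pB v - v)) = v := by
        have h6 := hQ'ap v
        rw [hRBap v, hRAap _] at h6
        rw [← h6]
        exact h2
      obtain ⟨hB0, hA0'⟩ := fix_char hα0 hβ0 hβ1 (⇑pB) (⇑pA) hIPB hIPA
        (fun y => map_neg pA y) v h5
      exact (hFiff v).2 (hfixQrev v hA0' hB0)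
    · intro hvF u hu
      obtain ⟨y, rfl⟩ := LinearMap.mem_range.1 hu
      obtain ⟨h1, h2⟩ := hfixQ v ((hFiff v).1 hvF)
      have h3 : Q' v = v := hfixQ'rev v h1 h2
      rw [ContinuousLinearMap.coe_coe, hSgap, inner_sub_left, hsaQ y v, h3, sub_self]
  have hFperp : Fᗮ = Rng.topologicalClosure := by
    rw [← hRngOrth, Submodule.orthogonal_orthogonal_eq_closure]
  -- convergence to zero on the range
  have hlimRng : ∀ y : H, Tendsto (fun n => ‖(Q^n) (y - Q y)‖) atTop (nhds 0) := by
    intro y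
    set aseq : ℕ → ℝ := fun n => ‖(Q^n) y‖ with haseq
    have hpow1 : ∀ n, (Q^(n+1)) y = Q ((Q^n) y) := by
      intro n; rw [pow_succ']; rfl
    have hanti : Antitone aseq := by
      apply antitone_nat_of_succ_le
      intro n
      rw [haseq]
      simp only
      rw [hpow1 n]
      exact hQnonexp _
    have hbdd : BddBelow (Set.range aseq) := by
      refine ⟨0, ?_⟩
      rintro r ⟨n, rfl⟩
      exact norm_nonneg _
    have hconv : Tendsto aseq atTop (nhds (⨅ n, aseq n)) := tendsto_atTop_ciInf hanti hbdd
    have hconvsq : Tendsto (fun n => (aseq n)^2) atTop (nhds ((⨅ n, aseq n)^2)) :=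
      hconv.pow 2
    have hconvsq' : Tendsto (fun n => (aseq (n+1))^2) atTop (nhds ((⨅ n, aseq n)^2)) :=
      hconvsq.comp (tendsto_add_atTop_nat 1)
    have hdiff : Tendsto (fun n => 2*β*α/((1-β) + 2*β*(1-α)) * ((aseq n)^2 - (aseq (n+1))^2))
        atTop (nhds 0) := by
      have := (hconvsq.sub hconvsq').const_mul (2*β*α/((1-β) + 2*β*(1-α)))
      simpa using this
    have hμ : 0 < (1-β) + 2*β*(1-α) := by nlinarith
    have hbound : ∀ n, ‖(Q^n) (y - Q y)‖^2
        ≤ 2*β*α/((1-β) + 2*β*(1-α)) * ((aseq n)^2 - (aseq (n+1))^2) := by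
      intro n
      have h1 : (Q^n) (y - Q y) = (Q^n) y - Q ((Q^n) y) := by
        rw [map_sub, ← hpow1, pow_succ]
        rfl
      have h2 := hQdrop ((Q^n) y)
      rw [← h1] at h2
      rw [haseq]
      simp only
      rw [hpow1 n]
      rw [div_mul_eq_mul_div, le_div_iff₀ hμ]
      calc ‖(Q^n) (y - Q y)‖^2 * ((1-β) + 2*β*(1-α))
          = ((1-β) + 2*β*(1-α)) * ‖(Q^n) (y - Q y)‖^2 := by ring
        _ ≤ 2*β*α*(‖(Q^n) y‖^2 - ‖Q ((Q^n) y)‖^2) := h2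
        _ = 2*β*α * (‖(Q^n) y‖^2 - ‖Q ((Q^n) y)‖^2) := by ring
    have hsq0 : Tendsto (fun n => ‖(Q^n) (y - Q y)‖^2) atTop (nhds 0) :=
      squeeze_zero (fun n => sq_nonneg _) hbound hdiff
    have h10 : Tendsto (fun n => Real.sqrt (‖(Q^n) (y - Q y)‖^2)) atTop (nhds (Real.sqrt 0)) :=
      (Real.continuous_sqrt.tendsto 0).comp hsq0
    rw [Real.sqrt_zero] at h10
    exact h10.congr (fun n => Real.sqrt_sq (norm_nonneg _))
  -- convergence to zero on Fᗮ
  have hlimFperp : ∀ w' : H, w' ∈ Fᗮ → Tendsto (fun n => (Q^n) w') atTop (nhds 0) := by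
    intro w' hw'
    rw [hFperp] at hw'
    have hw'cl : w' ∈ closure (Rng : Set H) := by
      rw [← Submodule.topologicalClosure_coe]
      exact hw'
    rw [NormedAddCommGroup.tendsto_nhds_zero]
    intro ε hε
    obtain ⟨u, hu, hdist⟩ := Metric.mem_closure_iff.1 hw'cl (ε/2) (by positivity)
    obtain ⟨y, rfl⟩ := LinearMap.mem_range.1 hu
    have hy := hlimRng y
    have hev : ∀ᶠ n in atTop, ‖(Q^n) (y - Q y)‖ < ε/2 :=
      hy.eventually_lt_const (by positivity)
    filter_upwards [hev] with n hn
    have hsplit : (Q^n) w' = (Q^n) (y - Q y) + (Q^n) (w' - Sg y) := by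
      rw [← map_add, hSgap]
      congr 1
      abel
    rw [hsplit]
    calc ‖(Q^n) (y - Q y) + (Q^n) (w' - Sg y)‖
        ≤ ‖(Q^n) (y - Q y)‖ + ‖(Q^n) (w' - Sg y)‖ := norm_add_le _ _
      _ ≤ ‖(Q^n) (y - Q y)‖ + ‖w' - Sg y‖ := by linarith [hQnn n (w' - Sg y)]
      _ < ε/2 + ε/2 := by
          have : ‖w' - Sg y‖ < ε/2 := by rwa [dist_eq_norm] at hdist
          linarith
      _ = ε := by ring
  -- the iterates
  have hxn : ∀ n, x n = z₀ + (Q^n) (x 0 - z₀) := by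
    intro n
    induction n with
    | zero => simp
    | succ n ih =>
      rw [hrec n, hTz (x n), ih]
      have h1 : (Q^(n+1)) (x 0 - z₀) = Q ((Q^n) (x 0 - z₀)) := by rw [pow_succ']; rfl
      rw [h1]
      congr 2
      abel
  have hQnfix : ∀ (v : H), Q v = v → ∀ n, (Q^n) v = v := by
    intro v hv n
    induction n with
    | zero => simp
    | succ n ih =>
      have h1 : (Q^(n+1)) v = Q ((Q^n) v) := by rw [pow_succ']; rfl
      rw [h1, ih, hv]
  set d : H := x 0 - z₀ with hd
  set f0 : H := (Submodule.orthogonalProjectionOnto F d : H) with hf0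
  have hf0F : f0 ∈ F := SetLike.coe_mem _
  have hworth : d - f0 ∈ Fᗮ := Submodule.sub_starProjection_mem_orthogonal d
  have hQf0 : Q f0 = f0 := (hFiff f0).1 hf0F
  set w : H := z₀ + f0 with hwdef
  have hxn2 : ∀ n, x n = w + (Q^n) (d - f0) := by
    intro n
    rw [hxn n]
    have hms : (Q^n) (d - f0) = (Q^n) d - (Q^n) f0 := map_sub _ _ _
    rw [hms, hQnfix f0 hQf0 n, hwdef]
    abel
  have htend : Tendsto x atTop (nhds w) := by
    have h1 := (hlimFperp (d - f0) hworth).const_add w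
    rw [add_zero] at h1
    exact h1.congr (fun n => (hxn2 n).symm)
  have hwfix : T w = w := by
    rw [hSiff w]
    have h2 : w - z₀ = f0 := by rw [hwdef]; abel
    rw [h2]
    exact hQf0
  refine ⟨⟨z₀, hfixz₀⟩, ?_, ?_, ⟨w, ⟨hwfix, ?_⟩, htend⟩⟩
  · have hSeq : {z | T z = z} = {z : H | z₀ + Q (z - z₀) = z} := by
      ext z
      rw [Set.mem_setOf_eq, Set.mem_setOf_eq, hTz z]
    rw [hSeq]
    exact isClosed_eq
      (continuous_const.add (Q.continuous.comp (continuous_id.sub continuous_const)))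
      continuous_id
  · intro z1 hz1 z2 hz2 t1 t2 ht1 ht2 hsum
    rw [Set.mem_setOf_eq] at hz1 hz2 ⊢
    have hq1 := (hSiff z1).1 hz1
    have hq2 := (hSiff z2).1 hz2
    rw [hSiff]
    have hz : t1 • z₀ + t2 • z₀ = z₀ := by rw [← add_smul, hsum, one_smul]
    have hcomb : t1 • z1 + t2 • z2 - z₀ = t1 • (z1 - z₀) + t2 • (z2 - z₀) := by
      linear_combination (norm := module) hz
    rw [hcomb, map_add, map_smul, map_smul, hq1, hq2]
  · intro z hz
    rw [Set.mem_setOf_eq] at hz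
    have hf' : z - z₀ ∈ F := (hFiff _).2 ((hSiff z).1 hz)
    have h1 : x 0 - w = d - f0 := by rw [hd, hwdef]; abel
    have h2 : x 0 - z = (d - f0) + (f0 - (z - z₀)) := by rw [hd]; abel
    have horth2 : ⟪d - f0, f0 - (z - z₀)⟫ = 0 := by
      rw [real_inner_comm]
      exact (Submodule.mem_orthogonal F _).1 hworth _ (F.sub_mem hf0F hf')
    have h3 : ‖x 0 - z‖^2 = ‖d - f0‖^2 + ‖f0 - (z - z₀)‖^2 := by
      rw [h2, norm_add_sq_real, horth2]
      ring
    have h4 : ‖x 0 - w‖^2 ≤ ‖x 0 - z‖^2 := by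
      rw [h1, h3]
      nlinarith [sq_nonneg ‖f0 - (z - z₀)‖]
    have h5 := Real.sqrt_le_sqrt h4
    rwa [Real.sqrt_sq (norm_nonneg _), Real.sqrt_sq (norm_nonneg _)] at h5
end

section
/- Let H be a real Hilbert space and let A, B ⊆ H be nonempty closed convex sets with A ∩ B ≠ ∅. Then the following are equivalent: (i) {A, B} has the strong CHIP, i.e., N_{A∩B}(x) = N_A(x) + N_B(x) for every x ∈ A ∩ B; (ii) for every q ∈ H, q − P_{A∩B}(q) ∈ N_A(P_{A∩B}(q)) + N_B(P_{A∩B}(q)). -/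
open RealInnerProductSpace Pointwise

/-- For nonempty closed convex `A, B` with `A ∩ B ≠ ∅`, the pair `{A, B}`
has the strong CHIP if and only if `q − P_{A∩B}(q) ∈ N_A(P_{A∩B}(q)) + N_B(P_{A∩B}(q))`
for every `q ∈ H`. -/
theorem stmt_17 {H : Type*} [NormedAddCommGroup H] [InnerProductSpace ℝ H] [CompleteSpace H]
    (A B : Set H) (hAne : A.Nonempty) (hAc : IsClosed A) (hAv : Convex ℝ A)
    (hBne : B.Nonempty) (hBc : IsClosed B) (hBv : Convex ℝ B)
    (hAB : (A ∩ B).Nonempty)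
    (PAB : H → H)
    (hPAB : ∀ x, PAB x ∈ A ∩ B ∧ ∀ c ∈ A ∩ B, ‖x - PAB x‖ ≤ ‖x - c‖) :
    (∀ x ∈ A ∩ B, normalCone (A ∩ B) x = normalCone A x + normalCone B x) ↔
      (∀ q : H, q - PAB q ∈ normalCone A (PAB q) + normalCone B (PAB q)) := by
  have hKv : Convex ℝ (A ∩ B) := hAv.inter hBv
  have key : ∀ q : H, ∀ c ∈ A ∩ B, ⟪q - PAB q, c - PAB q⟫ ≤ 0 := by
    intro q
    obtain ⟨h1, h2⟩ := hPAB q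
    haveI : Nonempty ↥(A ∩ B) := ⟨⟨PAB q, h1⟩⟩
    have heq : ‖q - PAB q‖ = ⨅ w : ↥(A ∩ B), ‖q - (w : H)‖ := by
      refine le_antisymm (le_ciInf fun w => h2 w w.2) ?_
      exact ciInf_le (f := fun w : ↥(A ∩ B) => ‖q - (w : H)‖) ⟨0, Set.forall_mem_range.mpr fun w => norm_nonneg _⟩ ⟨PAB q, h1⟩
    exact (norm_eq_iInf_iff_real_inner_le_zero hKv h1).mp heq
  constructor
  · intro hCHIP q
    have hmem : q - PAB q ∈ normalCone (A ∩ B) (PAB q) := ⟨(hPAB q).1, key q⟩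
    rw [← hCHIP (PAB q) (hPAB q).1]
    exact hmem
  · intro h x hx
    ext u
    constructor
    · intro hu
      have hp : PAB (x + u) = x := by
        have h1 := key (x + u) x hx
        have h2 := hu.2 (PAB (x + u)) (hPAB (x + u)).1
        have e : x + u - PAB (x + u) = (x - PAB (x + u)) + u := by abel
        rw [e, inner_add_left] at h1
        have h2' : (0 : ℝ) ≤ ⟪u, x - PAB (x + u)⟫ := by
          have : PAB (x + u) - x = -(x - PAB (x + u)) := by abel
          rw [this, inner_neg_right] at h2
          linarith
        have hzero : ⟪x - PAB (x + u), x - PAB (x + u)⟫ ≤ 0 := by linarith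
        have := real_inner_self_nonpos.mp hzero
        rw [sub_eq_zero] at this
        exact this.symm
      have := h (x + u)
      rw [hp] at this
      simpa using this
    · intro hu
      rw [Set.mem_add] at hu
      obtain ⟨a, ha, b, hb, rfl⟩ := hu
      refine ⟨hx, fun c hc => ?_⟩
      have := add_nonpos (ha.2 c hc.1) (hb.2 c hc.2)
      rw [inner_add_left]
      linarith
end
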